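/- arXiv:2411.04010 — 5 statements merged into one kernel-verified Lean document; each statement's English description precedes it below -/
import Mathlib

section
/- Let A = L + iH with L, H Hermitian N×N matrices and set U(k,t) = e^{−it(kL + H)}. Let f : ℝ → ℂ be continuously differentiable with f, f′ bounded, and let g : (0,∞) → ℂ be continuously differentiable with g, g′, and t ↦ t·g(t) bounded. Fix K, T > 0 and positive integers M_k, M_t; set h_k = 2K/M_k, h_t = T/M_t, k_j = −K + j h_k, t_l = l h_t, c_j = h_k f(k_j)/(1 − i k_j), and ĉ_l = h_t g(t_l). Then ‖ ∫_0^T ∫_{−K}^K (f(k)g(t)/(1 − ik)) U(k,t) dk dt − Σ_{j=0}^{M_k−1} Σ_{l=0}^{M_t−1} c_j ĉ_l U(k_j, t_l) ‖ ≤ 2KT h_k ( ‖f‖_∞ ‖t g(t)‖_∞ ‖A‖ + (‖f′‖_∞ + ‖f‖_∞) ‖g‖_∞ ) + 2KT h_t ( 2 ‖f‖_∞ ‖g‖_∞ ‖A‖ + ‖f‖_∞ ‖g′‖_∞ ), where ‖f‖_∞ denotes the supremum norm over ℝ, the sup norms of g, g′, t g(t) are over (0,∞), and ‖A‖ is the operator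 norm. -/
open MeasureTheory Matrix
open scoped Matrix.Norms.L2Operator
open NormedSpace

open MeasureTheory Matrix NormedSpace
open scoped Matrix.Norms.L2Operator

theorem lq_exp_skew_norm_le (N : ℕ) (X : Matrix (Fin N) (Fin N) ℂ) (hX : Xᴴ = -X) :
    ‖exp X‖ ≤ 1 := by
  have h1 : star (exp X) * exp X = 1 := by
    rw [star_exp]
    show exp Xᴴ * exp X = 1
    rw [hX, ← Matrix.exp_add_of_commute _ _ ((Commute.refl X).neg_left), neg_add_cancel, exp_zero]
  have h2 : ‖exp X‖ * ‖exp X‖ ≤ 1 := by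
    rw [← CStarRing.norm_star_mul_self, h1]
    rcases subsingleton_or_nontrivial (Matrix (Fin N) (Fin N) ℂ) with h | h
    · simp [Subsingleton.elim (1 : Matrix (Fin N) (Fin N) ℂ) 0]
    · rw [CStarRing.norm_one]
  nlinarith [norm_nonneg (exp X)]

theorem lq_skew_smul (N : ℕ) (X : Matrix (Fin N) (Fin N) ℂ) (hX : Xᴴ = -X) (s : ℝ) :
    (s • X)ᴴ = -(s • X) := by
  rw [show s • X = (s : ℂ) • X by rw [← algebraMap_smul ℂ s X]; norm_num]
  rw [Matrix.conjTranspose_smul, hX]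
  simp

theorem lq_duhamel (N : ℕ) (X Y : Matrix (Fin N) (Fin N) ℂ)
    (hX : Xᴴ = -X) (hY : Yᴴ = -Y) :
    ‖exp X - exp Y‖ ≤ ‖X - Y‖ := by
  set ψ : ℝ → Matrix (Fin N) (Fin N) ℂ :=
    fun s => exp (s • X) * exp ((1 - s) • Y) with hψdef
  have hψ : ∀ s : ℝ, HasDerivAt ψ
      (exp (s • X) * ((X - Y) * exp ((1 - s) • Y))) s := by
    intro s
    have h1 : HasDerivAt (fun u : ℝ => exp (u • X)) (exp (s • X) * X) s :=
      hasDerivAt_exp_smul_const X s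
    have h2' : HasDerivAt (fun u : ℝ => exp (u • Y)) (exp ((1 - s) • Y) * Y) (1 - s) :=
      hasDerivAt_exp_smul_const Y (1 - s)
    have hu : HasDerivAt (fun s : ℝ => 1 - s) (-1) s := by
      simpa using (hasDerivAt_id s).const_sub 1
    have h2 : HasDerivAt (fun s : ℝ => exp ((1 - s) • Y))
        ((-1 : ℝ) • (exp ((1 - s) • Y) * Y)) s := h2'.scomp s hu
    have := h1.mul h2
    refine this.congr_deriv (Eq.symm ?_)
    have hc : Y * exp ((1 - s) • Y) = exp ((1 - s) • Y) * Y :=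
      (((Commute.refl Y).smul_right (1 - s)).exp_right).eq
    simp only [sub_mul, mul_sub, hc, neg_one_smul, mul_neg, mul_assoc]
    abel
  have bound : ∀ s : ℝ, ‖exp (s • X) * ((X - Y) * exp ((1 - s) • Y))‖ ≤ ‖X - Y‖ := by
    intro s
    have e1 : ‖exp (s • X)‖ ≤ 1 := by
      exact lq_exp_skew_norm_le N _ (lq_skew_smul N X hX s)
    have e2 : ‖exp ((1 - s) • Y)‖ ≤ 1 := by
      exact lq_exp_skew_norm_le N _ (lq_skew_smul N Y hY (1 - s))
    calc ‖exp (s • X) * ((X - Y) * exp ((1 - s) • Y))‖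
        ≤ ‖exp (s • X)‖ * (‖X - Y‖ * ‖exp ((1 - s) • Y)‖) :=
          (norm_mul_le _ _).trans (by gcongr; exact norm_mul_le _ _)
      _ ≤ 1 * (‖X - Y‖ * 1) := by gcongr
      _ = ‖X - Y‖ := by ring
  have key := Convex.norm_image_sub_le_of_norm_hasDerivWithin_le
    (f := ψ) (f' := fun s => exp (s • X) * ((X - Y) * exp ((1 - s) • Y)))
    (s := (Set.univ : Set ℝ)) (C := ‖X - Y‖)
    (fun x _ => (hψ x).hasDerivWithinAt) (fun x _ => bound x) convex_univ
    (Set.mem_univ 0) (Set.mem_univ 1)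
  simpa [hψdef, exp_zero] using key

section aux
variable {N : ℕ} {L H : Matrix (Fin N) (Fin N) ℂ}

theorem lq_gen_skew (hL : L.IsHermitian) (hH : H.IsHermitian) (k t : ℝ) :
    ((-(Complex.I * t)) • ((k : ℂ) • L + H))ᴴ
      = -((-(Complex.I * t)) • ((k : ℂ) • L + H)) := by
  have h1 : ((k : ℂ) • L + H)ᴴ = (k : ℂ) • L + H := by
    rw [Matrix.conjTranspose_add, Matrix.conjTranspose_smul, hL.eq, hH.eq]
    norm_num
  rw [Matrix.conjTranspose_smul, h1, ← neg_smul]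
  congr 1
  simp [Complex.ext_iff]

theorem lq_gen_eq (k t : ℝ) :
    (-(Complex.I * t)) • ((k : ℂ) • L + H)
      = t • ((-Complex.I) • ((k : ℂ) • L + H)) := by
  rw [← algebraMap_smul ℂ t ((-Complex.I) • ((k : ℂ) • L + H)), smul_smul]
  congr 1
  simp [Complex.coe_algebraMap]
  ring

theorem lq_U_deriv (hL : L.IsHermitian) (hH : H.IsHermitian) (k t : ℝ) :
    HasDerivAt (fun s : ℝ => exp ((-(Complex.I * s)) • ((k : ℂ) • L + H)))
      (exp ((-(Complex.I * t)) • ((k : ℂ) • L + H))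
        * ((-Complex.I) • ((k : ℂ) • L + H))) t := by
  have h := hasDerivAt_exp_smul_const (𝕂 := ℝ) ((-Complex.I) • ((k : ℂ) • L + H)) t
  simp only [← lq_gen_eq] at h
  exact h

theorem lq_U_norm (hL : L.IsHermitian) (hH : H.IsHermitian) (k t : ℝ) :
    ‖exp ((-(Complex.I * t)) • ((k : ℂ) • L + H))‖ ≤ 1 :=
  lq_exp_skew_norm_le N _ (lq_gen_skew hL hH k t)

theorem lq_U_lip (hL : L.IsHermitian) (hH : H.IsHermitian) (t k k' : ℝ) :
    ‖exp ((-(Complex.I * t)) • ((k : ℂ) • L + H))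
      - exp ((-(Complex.I * t)) • ((k' : ℂ) • L + H))‖
      ≤ |t| * ‖L‖ * |k - k'| := by
  refine (lq_duhamel N _ _ (lq_gen_skew hL hH k t) (lq_gen_skew hL hH k' t)).trans ?_
  have heq : (-(Complex.I * t)) • ((k : ℂ) • L + H)
      - (-(Complex.I * t)) • ((k' : ℂ) • L + H)
      = (-(Complex.I * t)) • (((k : ℂ) - k') • L) := by
    rw [← smul_sub]
    congr 1
    rw [add_sub_add_right_eq_sub, ← sub_smul]
  rw [heq, norm_smul, norm_smul]
  have h1 : ‖-(Complex.I * (t : ℂ))‖ = |t| := by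
    simp [Complex.norm_real]
  have h2 : ‖(k : ℂ) - (k' : ℂ)‖ = |k - k'| := by
    rw [← Complex.ofReal_sub]
    rw [Complex.norm_real, Real.norm_eq_abs]
  rw [h1, h2]
  ring_nf
  exact le_rfl

end aux

theorem lq_cell_bound {E : Type*} [NormedAddCommGroup E] [NormedSpace ℝ E] [CompleteSpace E]
    (F : ℝ → E) (a b : ℝ) (hab : a ≤ b) (hint : IntervalIntegrable F volume a b) (C : ℝ)
    (hC : ∀ x ∈ Set.Ioc a b, ‖F x - F a‖ ≤ C) :
    ‖(∫ x in a..b, F x) - (b - a) • F a‖ ≤ C * (b - a) := by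
  have h1 : (b - a) • F a = ∫ _ in a..b, F a := by
    rw [intervalIntegral.integral_const]
  rw [h1, ← intervalIntegral.integral_sub hint intervalIntegrable_const]
  have h2 := intervalIntegral.norm_integral_le_of_norm_le_const
    (C := C) (f := fun x => F x - F a) (a := a) (b := b) (by
      intro x hx
      rw [Set.uIoc_of_le hab] at hx
      exact hC x hx)
  rwa [abs_of_nonneg (by linarith)] at h2
open MeasureTheory Matrix NormedSpace

theorem lq_den_sq (k : ℝ) : ‖(1 : ℂ) - Complex.I * k‖ ^ 2 = 1 + k ^ 2 := by
  rw [Complex.sq_norm, Complex.normSq_apply]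
  simp [Complex.sub_re, Complex.sub_im, Complex.mul_re, Complex.mul_im]
  ring

theorem lq_den_one (k : ℝ) : 1 ≤ ‖(1 : ℂ) - Complex.I * k‖ := by
  nlinarith [lq_den_sq k, norm_nonneg ((1 : ℂ) - Complex.I * k), sq_nonneg k]

theorem lq_den_k (k : ℝ) : |k| ≤ ‖(1 : ℂ) - Complex.I * k‖ := by
  nlinarith [lq_den_sq k, abs_nonneg k, norm_nonneg ((1 : ℂ) - Complex.I * k), sq_abs k]

theorem lq_den_ne (k : ℝ) : (1 : ℂ) - Complex.I * k ≠ 0 := by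
  intro h
  have h1 := lq_den_one k
  rw [h] at h1
  simp at h1
  linarith

theorem lq_phi_deriv (f : ℝ → ℂ) (hf : ContDiff ℝ 1 f) (k : ℝ) :
    HasDerivAt (fun x : ℝ => f x / (1 - Complex.I * x))
      ((deriv f k * (1 - Complex.I * k) - f k * (-Complex.I)) / (1 - Complex.I * k) ^ 2) k := by
  have hfd : HasDerivAt f (deriv f k) k := (hf.differentiable one_ne_zero k).hasDerivAt
  have h0 : HasDerivAt (fun x : ℝ => (x : ℂ)) 1 k := by
    exact Complex.ofRealCLM.hasDerivAt (x := k)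
  have hden : HasDerivAt (fun x : ℝ => (1 : ℂ) - Complex.I * (x : ℂ)) (-Complex.I) k := by
    simpa using (h0.const_mul Complex.I).const_sub 1
  exact hfd.div hden (lq_den_ne k)

theorem lq_phi_lip (f : ℝ → ℂ) (hf : ContDiff ℝ 1 f) (Cf Cf' : ℝ)
    (hCf : ∀ k : ℝ, ‖f k‖ ≤ Cf) (hCf' : ∀ k : ℝ, ‖deriv f k‖ ≤ Cf') (k k' : ℝ) :
    ‖f k / (1 - Complex.I * k) - f k' / (1 - Complex.I * k')‖ ≤ (Cf' + Cf) * |k - k'| := by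
  have hCf0 : 0 ≤ Cf := le_trans (norm_nonneg _) (hCf 0)
  have hCf'0 : 0 ≤ Cf' := le_trans (norm_nonneg _) (hCf' 0)
  have bound : ∀ x : ℝ,
      ‖(deriv f x * (1 - Complex.I * x) - f x * (-Complex.I)) / (1 - Complex.I * x) ^ 2‖
        ≤ Cf' + Cf := by
    intro x
    have h1 := lq_den_one x
    rw [norm_div, norm_pow, div_le_iff₀ (by positivity)]
    have h2 : ‖deriv f x * (1 - Complex.I * x) - f x * (-Complex.I)‖
        ≤ Cf' * ‖(1 : ℂ) - Complex.I * x‖ + Cf := by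
      refine (norm_sub_le _ _).trans ?_
      rw [norm_mul, norm_mul]
      have := hCf x
      have := hCf' x
      have := norm_nonneg ((1 : ℂ) - Complex.I * x)
      have : ‖-Complex.I‖ = 1 := by simp
      nlinarith [hCf x, hCf' x, norm_nonneg ((1 : ℂ) - Complex.I * x),
        norm_nonneg (f x), norm_nonneg (deriv f x), lq_den_one x]
    set d := ‖(1 : ℂ) - Complex.I * x‖ with hd
    have hd1 : d ≤ d ^ 2 := by nlinarith
    have hd2 : (1 : ℝ) ≤ d ^ 2 := by nlinarith
    have e1 : Cf' * d ≤ Cf' * d ^ 2 := mul_le_mul_of_nonneg_left hd1 hCf'0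
    have e2 : Cf ≤ Cf * d ^ 2 := by
      calc Cf = Cf * 1 := by ring
        _ ≤ Cf * d ^ 2 := mul_le_mul_of_nonneg_left hd2 hCf0
    nlinarith [h2, e1, e2]
  have key := Convex.norm_image_sub_le_of_norm_hasDerivWithin_le
    (f := fun x : ℝ => f x / (1 - Complex.I * x))
    (f' := fun x => (deriv f x * (1 - Complex.I * x) - f x * (-Complex.I))
        / (1 - Complex.I * x) ^ 2)
    (s := (Set.univ : Set ℝ)) (C := Cf' + Cf)
    (fun x _ => (lq_phi_deriv f hf x).hasDerivWithinAt) (fun x _ => bound x) convex_univ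
    (Set.mem_univ k') (Set.mem_univ k)
  rwa [Real.norm_eq_abs] at key


set_option maxHeartbeats 1000000 in
/-- **Quadrature error of the Riemann-sum discretization** (Part 2 of Lemma 6 of the paper).
With `A = L + iH` (`L, H` Hermitian), `U(k,t) = e^{−it(kL+H)}`, `f` continuously
differentiable with `‖f‖_∞ ≤ Cf`, `‖f′‖_∞ ≤ Cf'`, and `g` continuously differentiable on
`[0,∞)` with `‖g‖_∞ ≤ Cg`, `‖g′‖_∞ ≤ Cg'`, `‖t g(t)‖_∞ ≤ Ctg` on `(0,∞)`, the
left-endpoint Riemann sum on the grid `k_j = −K + j h_k`, `t_l = l h_t` with weights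
`c_j = h_k f(k_j)/(1 − i k_j)`, `ch_l = h_t g(t_l)` approximates the truncated double
integral with operator-norm error at most
`2KT h_k (Cf Ctg ‖A‖ + (Cf' + Cf) Cg) + 2KT h_t (2 Cf Cg ‖A‖ + Cf Cg')`. -/
theorem lap_lchs_quadrature_error (N : ℕ) (L H A : Matrix (Fin N) (Fin N) ℂ)
    (hL : L.IsHermitian) (hH : H.IsHermitian) (hA : A = L + Complex.I • H)
    (U : ℝ → ℝ → Matrix (Fin N) (Fin N) ℂ)
    (hU : ∀ k t : ℝ, U k t =
      NormedSpace.exp ((-(Complex.I * t)) • ((k : ℂ) • L + H)))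
    (f : ℝ → ℂ) (hf : ContDiff ℝ 1 f)
    (g : ℝ → ℂ) (hg : ContDiffOn ℝ 1 g (Set.Ici 0))
    (Cf Cf' Cg Cg' Ctg : ℝ)
    (hCf : ∀ k : ℝ, ‖f k‖ ≤ Cf)
    (hCf' : ∀ k : ℝ, ‖deriv f k‖ ≤ Cf')
    (hCg : ∀ t ∈ Set.Ioi (0 : ℝ), ‖g t‖ ≤ Cg)
    (hCg' : ∀ t ∈ Set.Ioi (0 : ℝ), ‖deriv g t‖ ≤ Cg')
    (hCtg : ∀ t ∈ Set.Ioi (0 : ℝ), ‖t • g t‖ ≤ Ctg)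
    (K T : ℝ) (hK : 0 < K) (hT : 0 < T)
    (Mk Mt : ℕ) (hMk : 0 < Mk) (hMt : 0 < Mt)
    (hk ht : ℝ) (hhk : hk = 2 * K / Mk) (hht : ht = T / Mt)
    (kj tl : ℕ → ℝ) (hkj : ∀ j : ℕ, kj j = -K + j * hk) (htl : ∀ l : ℕ, tl l = l * ht)
    (c ch : ℕ → ℂ)
    (hc : ∀ j : ℕ, c j = hk * f (kj j) / (1 - Complex.I * (kj j)))
    (hch : ∀ l : ℕ, ch l = ht * g (tl l)) :
    ‖(∫ t in Set.Ioc (0 : ℝ) T, ∫ k in Set.Icc (-K) K,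
        (f k * g t / (1 - Complex.I * k)) • U k t)
      - ∑ j ∈ Finset.range Mk, ∑ l ∈ Finset.range Mt, (c j * ch l) • U (kj j) (tl l)‖
    ≤ 2 * K * T * hk * (Cf * Ctg * ‖A‖ + (Cf' + Cf) * Cg)
      + 2 * K * T * ht * (2 * Cf * Cg * ‖A‖ + Cf * Cg') := by
  -- Notation
  set P : ℝ → ℝ → Matrix (Fin N) (Fin N) ℂ :=
    fun k t => (f k * g t / (1 - Complex.I * k)) • U k t with hP
  set G : ℝ → Matrix (Fin N) (Fin N) ℂ := fun t => ∫ k in (-K)..K, P k t with hG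
  set Rsum : ℝ → Matrix (Fin N) (Fin N) ℂ :=
    fun τ => ∑ j ∈ Finset.range Mk, hk • P (kj j) τ with hRsum
  set Bg : ℝ → Matrix (Fin N) (Fin N) ℂ :=
    fun k => (-Complex.I) • ((k : ℂ) • L + H) with hBg
  -- numeric facts
  have hkpos : 0 < hk := by rw [hhk]; positivity
  have htpos : 0 < ht := by rw [hht]; positivity
  have hMkhk : (Mk : ℝ) * hk = 2 * K := by
    rw [hhk]; field_simp
  have hMtht : (Mt : ℝ) * ht = T := by
    rw [hht]; field_simp
  have hkjs : ∀ j : ℕ, kj (j + 1) - kj j = hk := by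
    intro j; rw [hkj, hkj]; push_cast; ring
  have htls : ∀ l : ℕ, tl (l + 1) - tl l = ht := by
    intro l; rw [htl, htl]; push_cast; ring
  have hkj0 : kj 0 = -K := by rw [hkj]; push_cast; ring
  have htl0 : tl 0 = 0 := by rw [htl]; push_cast; ring
  have hkjM : kj Mk = K := by rw [hkj]; rw [hMkhk]; ring
  have htlM : tl Mt = T := by rw [htl]; rw [hMtht]
  have hkj_mem : ∀ j ≤ Mk, kj j ∈ Set.Icc (-K) K := by
    intro j hj
    rw [hkj]
    constructor
    · nlinarith [Nat.cast_nonneg (α := ℝ) j, hkpos.le]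
    · have : (j : ℝ) ≤ Mk := Nat.cast_le.mpr hj
      nlinarith
  have htl_mem : ∀ l ≤ Mt, tl l ∈ Set.Icc (0 : ℝ) T := by
    intro l hl
    rw [htl]
    constructor
    · positivity
    · have : (l : ℝ) ≤ Mt := Nat.cast_le.mpr hl
      nlinarith
  have hCf0 : 0 ≤ Cf := le_trans (norm_nonneg _) (hCf 0)
  have hCf'0 : 0 ≤ Cf' := le_trans (norm_nonneg _) (hCf' 0)
  have hCg0 : 0 ≤ Cg := le_trans (norm_nonneg _) (hCg T hT)
  have hCg'0 : 0 ≤ Cg' := le_trans (norm_nonneg _) (hCg' T hT)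
  have hCtg0 : 0 ≤ Ctg := le_trans (norm_nonneg _) (hCtg T hT)
  have hA0 : (0 : ℝ) ≤ ‖A‖ := norm_nonneg A
  -- operator norm facts
  have hAH : Aᴴ = L - Complex.I • H := by
    rw [hA, Matrix.conjTranspose_add, Matrix.conjTranspose_smul, hL.eq, hH.eq]
    rw [Complex.star_def, Complex.conj_I, neg_smul, sub_eq_add_neg]
  have hLA : ‖L‖ ≤ ‖A‖ := by
    have h2L : A + Aᴴ = (2 : ℂ) • L := by rw [hAH, hA]; module
    have : ‖(2 : ℂ) • L‖ ≤ 2 * ‖A‖ := by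
      rw [← h2L]
      calc ‖A + Aᴴ‖ ≤ ‖A‖ + ‖Aᴴ‖ := norm_add_le _ _
        _ = 2 * ‖A‖ := by rw [Matrix.l2_opNorm_conjTranspose]; ring
    rw [norm_smul] at this
    simp at this
    linarith
  have hHA : ‖H‖ ≤ ‖A‖ := by
    have h2H : A - Aᴴ = (2 : ℂ) • (Complex.I • H) := by rw [hAH, hA]; module
    have : ‖(2 : ℂ) • (Complex.I • H)‖ ≤ 2 * ‖A‖ := by
      rw [← h2H]
      calc ‖A - Aᴴ‖ ≤ ‖A‖ + ‖Aᴴ‖ := norm_sub_le _ _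
        _ = 2 * ‖A‖ := by rw [Matrix.l2_opNorm_conjTranspose]; ring
    rw [norm_smul, norm_smul] at this
    simp at this
    linarith
  -- U facts
  have hUnorm : ∀ k t : ℝ, ‖U k t‖ ≤ 1 := by
    intro k t; rw [hU]; exact lq_U_norm hL hH k t
  have hUlipk : ∀ t k k' : ℝ, ‖U k t - U k' t‖ ≤ |t| * ‖L‖ * |k - k'| := by
    intro t k k'; rw [hU, hU]; exact lq_U_lip hL hH t k k'
  -- g at 0 and derivWithin bounds
  have hIoiIci : Set.Ioi (0:ℝ) ⊆ Set.Ici 0 := Set.Ioi_subset_Ici_self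
  have hg0 : ‖g 0‖ ≤ Cg := by
    have hct : Filter.Tendsto g (nhdsWithin 0 (Set.Ioi 0)) (nhds (g 0)) :=
      ((hg.continuousOn 0 Set.self_mem_Ici).mono_left (nhdsWithin_mono 0 hIoiIci))
    refine le_of_tendsto hct.norm ?_
    exact eventually_nhdsWithin_of_forall (fun t htt => hCg t htt)
  have hDmatch : ∀ t : ℝ, 0 < t → derivWithin g (Set.Ici 0) t = deriv g t := by
    intro t htpos'
    apply derivWithin_of_mem_nhds
    exact mem_nhds_iff.mpr ⟨Set.Ioi 0, hIoiIci, isOpen_Ioi, htpos'⟩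
  have hD : ∀ t ∈ Set.Ici (0:ℝ), ‖derivWithin g (Set.Ici 0) t‖ ≤ Cg' := by
    intro t htmem
    rcases eq_or_lt_of_le (Set.mem_Ici.mp htmem) with h0 | h0
    · have hcont : ContinuousOn (derivWithin g (Set.Ici 0)) (Set.Ici 0) :=
        hg.continuousOn_derivWithin (uniqueDiffOn_Ici 0) le_rfl
      have hct : Filter.Tendsto (derivWithin g (Set.Ici 0)) (nhdsWithin 0 (Set.Ioi 0))
          (nhds (derivWithin g (Set.Ici 0) 0)) :=
        ((hcont 0 Set.self_mem_Ici).mono_left (nhdsWithin_mono 0 hIoiIci))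
      rw [← h0]
      refine le_of_tendsto hct.norm ?_
      exact eventually_nhdsWithin_of_forall
        (fun s hs => by rw [hDmatch s hs]; exact hCg' s hs)
    · rw [hDmatch t h0]; exact hCg' t h0
  have hgIcc : ∀ t ∈ Set.Icc (0:ℝ) T, ‖g t‖ ≤ Cg := by
    intro t ht0
    rcases eq_or_lt_of_le ht0.1 with h0 | h0
    · rw [← h0]; exact hg0
    · exact hCg t h0
  have htgIcc : ∀ t ∈ Set.Icc (0:ℝ) T, |t| * ‖g t‖ ≤ Ctg := by
    intro t ht0
    rcases eq_or_lt_of_le ht0.1 with h0 | h0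
    · rw [← h0]; simpa using hCtg0
    · have := hCtg t h0
      rwa [norm_smul, Real.norm_eq_abs] at this
  have hdpos : ∀ k : ℝ, (0:ℝ) < ‖(1 : ℂ) - Complex.I * k‖ :=
    fun k => lt_of_lt_of_le one_pos (lq_den_one k)
  have hphi : ∀ k : ℝ, ‖f k / (1 - Complex.I * k)‖ ≤ Cf := by
    intro k
    rw [norm_div, div_le_iff₀ (hdpos k)]
    nlinarith [lq_den_one k, hCf k, norm_nonneg (f k), hCf0]
  have hBnorm : ∀ k : ℝ, ‖Bg k‖ ≤ ‖(1 : ℂ) - Complex.I * k‖ * (2 * ‖A‖) := by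
    intro k
    simp only [hBg]
    have h1 : ‖(-Complex.I) • ((k : ℂ) • L + H)‖ = ‖(k : ℂ) • L + H‖ := by
      rw [norm_smul]; simp
    have h2 : ‖(k : ℂ) • L + H‖ ≤ |k| * ‖L‖ + ‖H‖ := by
      refine (norm_add_le _ _).trans ?_
      rw [norm_smul]
      simp [Complex.norm_real]
    have h3 := lq_den_k k
    have h4 := lq_den_one k
    have e1 : |k| * ‖L‖ ≤ ‖(1 : ℂ) - Complex.I * k‖ * ‖A‖ :=
      mul_le_mul h3 hLA (norm_nonneg L) (le_trans zero_le_one h4)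
    have e2 : ‖H‖ ≤ ‖(1 : ℂ) - Complex.I * k‖ * ‖A‖ := by nlinarith
    rw [h1]
    nlinarith [h2]
  -- k-Lipschitz bound for P
  have hPk : ∀ t ∈ Set.Icc (0:ℝ) T, ∀ k k' : ℝ,
      ‖P k t - P k' t‖ ≤ ((Cf' + Cf) * Cg + Cf * Ctg * ‖A‖) * |k - k'| := by
    intro t htmem k k'
    have hsplit : P k t - P k' t
        = g t • ((f k / (1 - Complex.I * k) - f k' / (1 - Complex.I * k')) • U k t)
          + g t • ((f k' / (1 - Complex.I * k')) • (U k t - U k' t)) := by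
      simp only [hP]
      match_scalars <;> ring
    rw [hsplit]
    refine (norm_add_le _ _).trans ?_
    have hb1 : ‖g t • ((f k / (1 - Complex.I * k) - f k' / (1 - Complex.I * k')) • U k t)‖
        ≤ Cg * ((Cf' + Cf) * |k - k'|) := by
      rw [norm_smul, norm_smul]
      calc ‖g t‖ * (‖f k / (1 - Complex.I * k) - f k' / (1 - Complex.I * k')‖ * ‖U k t‖)
          ≤ Cg * ((Cf' + Cf) * |k - k'| * 1) := by
            refine mul_le_mul (hgIcc t htmem) ?_ (by positivity) hCg0
            exact mul_le_mul (lq_phi_lip f hf Cf Cf' hCf hCf' k k') (hUnorm k t)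
              (norm_nonneg _) (by positivity)
        _ = Cg * ((Cf' + Cf) * |k - k'|) := by ring
    have hb2 : ‖g t • ((f k' / (1 - Complex.I * k')) • (U k t - U k' t))‖
        ≤ Ctg * (Cf * (‖A‖ * |k - k'|)) := by
      rw [norm_smul, norm_smul]
      have st1 : ‖f k' / (1 - Complex.I * k')‖ * ‖U k t - U k' t‖
          ≤ Cf * (|t| * ‖L‖ * |k - k'|) :=
        mul_le_mul (hphi k') (hUlipk t k k') (norm_nonneg _) hCf0
      have st2 : ‖g t‖ * (‖f k' / (1 - Complex.I * k')‖ * ‖U k t - U k' t‖)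
          ≤ ‖g t‖ * (Cf * (|t| * ‖L‖ * |k - k'|)) :=
        mul_le_mul_of_nonneg_left st1 (norm_nonneg _)
      have st3 : ‖g t‖ * (Cf * (|t| * ‖L‖ * |k - k'|))
          = (|t| * ‖g t‖) * (Cf * (‖L‖ * |k - k'|)) := by ring
      have st4 : (|t| * ‖g t‖) * (Cf * (‖L‖ * |k - k'|))
          ≤ Ctg * (Cf * (‖A‖ * |k - k'|)) := by
        refine mul_le_mul (htgIcc t htmem) ?_ (by positivity) hCtg0
        gcongr
      linarith [st2, st3 ▸ st2]
    calc _ ≤ Cg * ((Cf' + Cf) * |k - k'|) + Ctg * (Cf * (‖A‖ * |k - k'|)) := by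
          exact add_le_add hb1 hb2
      _ = ((Cf' + Cf) * Cg + Cf * Ctg * ‖A‖) * |k - k'| := by ring
  -- continuity of P in k
  have hPcont : ∀ t : ℝ, Continuous fun k : ℝ => P k t := by
    intro t
    simp only [hP]
    have h1 : Continuous fun k : ℝ => f k * g t / (1 - Complex.I * k) := by
      refine Continuous.div (hf.continuous.mul continuous_const) ?_ (fun k => lq_den_ne k)
      exact continuous_const.sub (continuous_const.mul Complex.continuous_ofReal)
    have h2 : Continuous fun k : ℝ => U k t := by
      have hfu : (fun k : ℝ => U k t)
          = fun k : ℝ => exp ((-(Complex.I * t)) • ((k : ℂ) • L + H)) := by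
        funext k; rw [hU]
      rw [hfu]
      exact (continuous_iff_continuousAt.mpr fun x => (exp_analytic (𝕂 := ℂ) x).continuousAt).comp
        (by fun_prop)
    exact h1.smul h2
  -- t-Lipschitz bound for P
  have hPt : ∀ (k : ℝ), ∀ t ∈ Set.Icc (0:ℝ) T, ∀ t' ∈ Set.Icc (0:ℝ) T,
      ‖P k t - P k t'‖ ≤ (Cf * Cg' + 2 * Cf * Cg * ‖A‖) * |t - t'| := by
    intro k t htm t' htm'
    have hIccIci : Set.Icc (0:ℝ) T ⊆ Set.Ici 0 := fun x hx => hx.1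
    have hPalt : ∀ u : ℝ, P k u = (g u * (f k / (1 - Complex.I * k))) • U k u := by
      intro u
      simp only [hP]
      congr 1
      ring
    have hder : ∀ s ∈ Set.Icc (0:ℝ) T, HasDerivWithinAt (fun u => P k u)
        ((g s * (f k / (1 - Complex.I * k))) • (U k s * Bg k)
          + (derivWithin g (Set.Ici 0) s * (f k / (1 - Complex.I * k))) • U k s)
        (Set.Icc 0 T) s := by
      intro s hs
      have hgs : HasDerivWithinAt g (derivWithin g (Set.Ici 0) s) (Set.Icc 0 T) s :=
        (((hg.differentiableOn one_ne_zero) s (hIccIci hs)).hasDerivWithinAt).mono hIccIci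
      have hcs : HasDerivWithinAt (fun u => g u * (f k / (1 - Complex.I * k)))
          (derivWithin g (Set.Ici 0) s * (f k / (1 - Complex.I * k))) (Set.Icc 0 T) s :=
        hgs.mul_const _
      have hUs : HasDerivWithinAt (fun u : ℝ => U k u) (U k s * Bg k) (Set.Icc 0 T) s := by
        have hfu : (fun u : ℝ => U k u)
            = fun u : ℝ => exp ((-(Complex.I * u)) • ((k : ℂ) • L + H)) := by
          funext u; rw [hU]
        rw [hfu, hU k s]
        simp only [hBg]
        exact (lq_U_deriv hL hH k s).hasDerivWithinAt
      have hsm := hcs.smul hUs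
      exact hsm.congr (fun u _ => hPalt u) (hPalt s)
    have hbound : ∀ s ∈ Set.Icc (0:ℝ) T,
        ‖(g s * (f k / (1 - Complex.I * k))) • (U k s * Bg k)
          + (derivWithin g (Set.Ici 0) s * (f k / (1 - Complex.I * k))) • U k s‖
          ≤ Cf * Cg' + 2 * Cf * Cg * ‖A‖ := by
      intro s hs
      refine (norm_add_le _ _).trans ?_
      have hb1 : ‖(g s * (f k / (1 - Complex.I * k))) • (U k s * Bg k)‖
          ≤ 2 * Cf * Cg * ‖A‖ := by
        rw [norm_smul, norm_mul]
        have hUB : ‖U k s * Bg k‖ ≤ ‖(1:ℂ) - Complex.I * k‖ * (2 * ‖A‖) := by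
          refine (norm_mul_le _ _).trans ?_
          calc ‖U k s‖ * ‖Bg k‖ ≤ 1 * (‖(1:ℂ) - Complex.I * k‖ * (2 * ‖A‖)) :=
                mul_le_mul (hUnorm k s) (hBnorm k) (norm_nonneg _) zero_le_one
            _ = _ := one_mul _
        have hphid : ‖f k / (1 - Complex.I * k)‖ * (‖(1:ℂ) - Complex.I * k‖ * (2 * ‖A‖))
            ≤ Cf * (2 * ‖A‖) := by
          rw [norm_div]
          have heq : ‖f k‖ / ‖(1:ℂ) - Complex.I * k‖
              * (‖(1:ℂ) - Complex.I * k‖ * (2 * ‖A‖)) = ‖f k‖ * (2 * ‖A‖) := by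
            have hne : ‖(1:ℂ) - Complex.I * (k:ℝ)‖ ≠ 0 := ne_of_gt (hdpos k)
            field_simp
          rw [heq]
          exact mul_le_mul_of_nonneg_right (hCf k) (by positivity)
        calc ‖g s‖ * ‖f k / (1 - Complex.I * k)‖ * ‖U k s * Bg k‖
            ≤ ‖g s‖ * (Cf * (2 * ‖A‖)) := by
              rw [mul_assoc]
              refine mul_le_mul_of_nonneg_left ?_ (norm_nonneg _)
              calc ‖f k / (1 - Complex.I * k)‖ * ‖U k s * Bg k‖
                  ≤ ‖f k / (1 - Complex.I * k)‖
                    * (‖(1:ℂ) - Complex.I * k‖ * (2 * ‖A‖)) :=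
                    mul_le_mul_of_nonneg_left hUB (norm_nonneg _)
                _ ≤ Cf * (2 * ‖A‖) := hphid
          _ ≤ Cg * (Cf * (2 * ‖A‖)) :=
              mul_le_mul_of_nonneg_right (hgIcc s hs) (by positivity)
          _ = 2 * Cf * Cg * ‖A‖ := by ring
      have hb2 : ‖(derivWithin g (Set.Ici 0) s * (f k / (1 - Complex.I * k))) • U k s‖
          ≤ Cf * Cg' := by
        rw [norm_smul, norm_mul]
        calc ‖derivWithin g (Set.Ici 0) s‖ * ‖f k / (1 - Complex.I * k)‖ * ‖U k s‖
            ≤ Cg' * Cf * 1 :=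
              mul_le_mul (mul_le_mul (hD s (hIccIci hs)) (hphi k) (norm_nonneg _) hCg'0)
                (hUnorm k s) (norm_nonneg _) (by positivity)
          _ = Cf * Cg' := by ring
      linarith
    have key := Convex.norm_image_sub_le_of_norm_hasDerivWithin_le
      (f := fun u => P k u)
      (f' := fun s => (g s * (f k / (1 - Complex.I * k))) • (U k s * Bg k)
        + (derivWithin g (Set.Ici 0) s * (f k / (1 - Complex.I * k))) • U k s)
      (s := Set.Icc (0:ℝ) T) (C := Cf * Cg' + 2 * Cf * Cg * ‖A‖)
      hder hbound (convex_Icc 0 T) htm' htm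
    rwa [Real.norm_eq_abs] at key
  -- conversion of the statement integrals
  have hKK : -K ≤ K := by linarith
  have hinner : ∀ t : ℝ, (∫ k in Set.Icc (-K) K, P k t) = G t := by
    intro t
    rw [MeasureTheory.integral_Icc_eq_integral_Ioc, hG]
    exact (intervalIntegral.integral_of_le hKK).symm
  have houter : (∫ t in Set.Ioc (0:ℝ) T, ∫ k in Set.Icc (-K) K, P k t)
      = ∫ t in (0:ℝ)..T, G t := by
    simp_rw [hinner]
    exact (intervalIntegral.integral_of_le hT.le).symm
  have hC2nonneg : 0 ≤ Cf * Cg' + 2 * Cf * Cg * ‖A‖ := by positivity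
  have hCk2nonneg : 0 ≤ (Cf' + Cf) * Cg + Cf * Ctg * ‖A‖ := by positivity
  -- G is Lipschitz on [0,T]
  have hGlip : ∀ t ∈ Set.Icc (0:ℝ) T, ∀ t' ∈ Set.Icc (0:ℝ) T,
      ‖G t - G t'‖ ≤ (2 * K * (Cf * Cg' + 2 * Cf * Cg * ‖A‖)) * |t - t'| := by
    intro t htm t' htm'
    have hint1 : IntervalIntegrable (fun k => P k t) volume (-K) K :=
      (hPcont t).intervalIntegrable _ _
    have hint2 : IntervalIntegrable (fun k => P k t') volume (-K) K :=
      (hPcont t').intervalIntegrable _ _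
    have hdiff : G t - G t' = ∫ k in (-K)..K, (P k t - P k t') := by
      rw [hG]; exact (intervalIntegral.integral_sub hint1 hint2).symm
    rw [hdiff]
    have hb := intervalIntegral.norm_integral_le_of_norm_le_const (a := -K) (b := K)
      (C := (Cf * Cg' + 2 * Cf * Cg * ‖A‖) * |t - t'|)
      (f := fun k => P k t - P k t')
      (fun x _ => hPt x t htm t' htm')
    have habs : |K - -K| = 2 * K := by rw [abs_of_pos (by linarith)]; ring
    rw [habs] at hb
    refine hb.trans (le_of_eq ?_)
    ring
  have hGcont : ContinuousOn G (Set.Icc 0 T) := by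
    have hlip : LipschitzOnWith
        (Real.toNNReal (2 * K * (Cf * Cg' + 2 * Cf * Cg * ‖A‖))) G (Set.Icc 0 T) := by
      rw [lipschitzOnWith_iff_dist_le_mul]
      intro x hx y hy
      rw [dist_eq_norm, Real.dist_eq]
      refine (hGlip x hx y hy).trans (le_of_eq ?_)
      rw [Real.coe_toNNReal _ (by positivity)]
    exact hlip.continuousOn
  -- Term A : time discretization
  have hintl : ∀ l < Mt, IntervalIntegrable G volume (tl l) (tl (l + 1)) := by
    intro l hl
    have hmem1 := htl_mem l (le_of_lt hl)
    have hmem2 := htl_mem (l + 1) (Nat.succ_le_of_lt hl)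
    have hle : tl l ≤ tl (l + 1) := by nlinarith [htls l]
    apply ContinuousOn.intervalIntegrable
    rw [Set.uIcc_of_le hle]
    exact hGcont.mono (Set.Icc_subset_Icc hmem1.1 hmem2.2)
  have hcellT : ∀ l < Mt, ‖(∫ x in (tl l)..(tl (l + 1)), G x) - ht • G (tl l)‖
      ≤ ((2 * K * (Cf * Cg' + 2 * Cf * Cg * ‖A‖)) * ht) * ht := by
    intro l hl
    have hmem1 := htl_mem l (le_of_lt hl)
    have hmem2 := htl_mem (l + 1) (Nat.succ_le_of_lt hl)
    have hle : tl l ≤ tl (l + 1) := by nlinarith [htls l]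
    have hcb := lq_cell_bound G (tl l) (tl (l + 1)) hle (hintl l hl)
      ((2 * K * (Cf * Cg' + 2 * Cf * Cg * ‖A‖)) * ht) (by
        intro x hx
        have hxm : x ∈ Set.Icc (0:ℝ) T :=
          (Set.Icc_subset_Icc hmem1.1 hmem2.2) ⟨le_of_lt hx.1, hx.2⟩
        refine (hGlip x hxm (tl l) hmem1).trans ?_
        have hxd : |x - tl l| ≤ ht := by
          rw [abs_of_nonneg (by linarith [hx.1])]
          nlinarith [htls l, hx.2]
        exact mul_le_mul_of_nonneg_left hxd (by positivity))
    rw [htls l] at hcb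
    exact hcb
  have hTermA : ‖(∫ t in (0:ℝ)..T, G t) - ∑ l ∈ Finset.range Mt, ht • G (tl l)‖
      ≤ 2 * K * T * ht * (Cf * Cg' + 2 * Cf * Cg * ‖A‖) := by
    have hsplit : (∫ t in (0:ℝ)..T, G t)
        = ∑ l ∈ Finset.range Mt, ∫ x in (tl l)..(tl (l + 1)), G x := by
      have h := intervalIntegral.sum_integral_adjacent_intervals hintl
      rw [htl0, htlM] at h
      exact h.symm
    rw [hsplit, ← Finset.sum_sub_distrib]
    refine (norm_sum_le _ _).trans ?_
    calc ∑ l ∈ Finset.range Mt, ‖(∫ x in (tl l)..(tl (l + 1)), G x) - ht • G (tl l)‖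
        ≤ ∑ _l ∈ Finset.range Mt,
            ((2 * K * (Cf * Cg' + 2 * Cf * Cg * ‖A‖)) * ht) * ht :=
          Finset.sum_le_sum (fun l hl => hcellT l (Finset.mem_range.mp hl))
      _ = (Mt : ℝ) * (((2 * K * (Cf * Cg' + 2 * Cf * Cg * ‖A‖)) * ht) * ht) := by
          rw [Finset.sum_const, Finset.card_range, nsmul_eq_mul]
      _ = ((Mt : ℝ) * ht) * ((2 * K * (Cf * Cg' + 2 * Cf * Cg * ‖A‖)) * ht) := by ring
      _ = 2 * K * T * ht * (Cf * Cg' + 2 * Cf * Cg * ‖A‖) := by rw [hMtht]; ring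
  -- Term B : k discretization at the grid times
  have hGR : ∀ τ ∈ Set.Icc (0:ℝ) T,
      ‖G τ - Rsum τ‖ ≤ 2 * K * hk * ((Cf' + Cf) * Cg + Cf * Ctg * ‖A‖) := by
    intro τ hτ
    have hintk : ∀ j : ℕ, IntervalIntegrable (fun k => P k τ) volume (kj j) (kj (j + 1)) :=
      fun j => (hPcont τ).intervalIntegrable _ _
    have hsplit : G τ = ∑ j ∈ Finset.range Mk, ∫ x in (kj j)..(kj (j + 1)), P x τ := by
      have h := intervalIntegral.sum_integral_adjacent_intervals (a := kj) (n := Mk) (fun j _ => hintk j)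
      rw [hkj0, hkjM] at h
      rw [hG]; exact h.symm
    rw [hsplit, hRsum, ← Finset.sum_sub_distrib]
    refine (norm_sum_le _ _).trans ?_
    have hcell : ∀ j < Mk, ‖(∫ x in (kj j)..(kj (j + 1)), P x τ) - hk • P (kj j) τ‖
        ≤ (((Cf' + Cf) * Cg + Cf * Ctg * ‖A‖) * hk) * hk := by
      intro j hj
      have hle : kj j ≤ kj (j + 1) := by nlinarith [hkjs j]
      have hcb := lq_cell_bound (fun x => P x τ) (kj j) (kj (j + 1)) hle (hintk j)
        (((Cf' + Cf) * Cg + Cf * Ctg * ‖A‖) * hk) (by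
          intro x hx
          refine (hPk τ hτ x (kj j)).trans ?_
          have hxd : |x - kj j| ≤ hk := by
            rw [abs_of_nonneg (by linarith [hx.1])]
            nlinarith [hkjs j, hx.2]
          exact mul_le_mul_of_nonneg_left hxd hCk2nonneg)
      rw [hkjs j] at hcb
      exact hcb
    calc ∑ j ∈ Finset.range Mk, ‖(∫ x in (kj j)..(kj (j + 1)), P x τ) - hk • P (kj j) τ‖
        ≤ ∑ _j ∈ Finset.range Mk, (((Cf' + Cf) * Cg + Cf * Ctg * ‖A‖) * hk) * hk :=
          Finset.sum_le_sum (fun j hj => hcell j (Finset.mem_range.mp hj))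
      _ = (Mk : ℝ) * ((((Cf' + Cf) * Cg + Cf * Ctg * ‖A‖) * hk) * hk) := by
          rw [Finset.sum_const, Finset.card_range, nsmul_eq_mul]
      _ = ((Mk : ℝ) * hk) * ((((Cf' + Cf) * Cg + Cf * Ctg * ‖A‖)) * hk) := by ring
      _ = 2 * K * hk * ((Cf' + Cf) * Cg + Cf * Ctg * ‖A‖) := by rw [hMkhk]; ring
  -- rewrite the double sum
  have hS : (∑ j ∈ Finset.range Mk, ∑ l ∈ Finset.range Mt, (c j * ch l) • U (kj j) (tl l))
      = ∑ l ∈ Finset.range Mt, ht • Rsum (tl l) := by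
    rw [Finset.sum_comm]
    refine Finset.sum_congr rfl (fun l _ => ?_)
    rw [hRsum, Finset.smul_sum]
    refine Finset.sum_congr rfl (fun j _ => ?_)
    simp only [hP]
    rw [← algebraMap_smul ℂ ht, ← algebraMap_smul ℂ hk, smul_smul, smul_smul]
    congr 1
    rw [hc, hch]
    simp only [Complex.coe_algebraMap]
    push_cast
    ring
  -- assemble
  have hdecomp : (∫ t in Set.Ioc (0:ℝ) T, ∫ k in Set.Icc (-K) K, P k t)
      - (∑ j ∈ Finset.range Mk, ∑ l ∈ Finset.range Mt, (c j * ch l) • U (kj j) (tl l))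
      = ((∫ t in (0:ℝ)..T, G t) - ∑ l ∈ Finset.range Mt, ht • G (tl l))
        + ∑ l ∈ Finset.range Mt, ht • (G (tl l) - Rsum (tl l)) := by
    rw [houter, hS]
    simp only [smul_sub, Finset.sum_sub_distrib]
    abel
  rw [hdecomp]
  refine (norm_add_le _ _).trans ?_
  have h2 : ‖∑ l ∈ Finset.range Mt, ht • (G (tl l) - Rsum (tl l))‖
      ≤ T * (2 * K * hk * ((Cf' + Cf) * Cg + Cf * Ctg * ‖A‖)) := by
    refine (norm_sum_le _ _).trans ?_
    calc ∑ l ∈ Finset.range Mt, ‖ht • (G (tl l) - Rsum (tl l))‖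
        = ∑ l ∈ Finset.range Mt, ht * ‖G (tl l) - Rsum (tl l)‖ := by
          refine Finset.sum_congr rfl (fun l _ => ?_)
          rw [norm_smul, Real.norm_eq_abs, abs_of_pos htpos]
      _ ≤ ∑ _l ∈ Finset.range Mt,
            ht * (2 * K * hk * ((Cf' + Cf) * Cg + Cf * Ctg * ‖A‖)) := by
          refine Finset.sum_le_sum (fun l hl => ?_)
          exact mul_le_mul_of_nonneg_left
            (hGR (tl l) (htl_mem l (le_of_lt (Finset.mem_range.mp hl)))) htpos.le
      _ = (Mt : ℝ) * (ht * (2 * K * hk * ((Cf' + Cf) * Cg + Cf * Ctg * ‖A‖))) := by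
          rw [Finset.sum_const, Finset.card_range, nsmul_eq_mul]
      _ = ((Mt : ℝ) * ht) * (2 * K * hk * ((Cf' + Cf) * Cg + Cf * Ctg * ‖A‖)) := by ring
      _ = T * (2 * K * hk * ((Cf' + Cf) * Cg + Cf * Ctg * ‖A‖)) := by rw [hMtht]
  refine le_trans (add_le_add hTermA h2) (le_of_eq ?_)
  ring
end

section
/- Let T ≥ 0 and z ∈ ℂ with Re z > 0, and define g(t) = Σ_{n=1}^∞ ((−1)^n / n!) · (T^n t^{n−1} / Γ(n)) for t > 0 (the series converges absolutely). Then t ↦ g(t) e^{−zt} is integrable on (0,∞) and ∫_0^∞ g(t) e^{−zt} dt = e^{−T/z} − 1. -/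
open MeasureTheory

namespace LTBaux

open Set Filter

lemma real_integrable {b : ℝ} (hb : 0 < b) (n : ℕ) :
    IntegrableOn (fun t : ℝ => t ^ n * Real.exp (-(b * t))) (Ioi 0) := by
  have h := integrableOn_rpow_mul_exp_neg_mul_rpow (s := (n : ℝ)) (p := 1)
    (by exact_mod_cast neg_one_lt_zero.trans_le (Nat.cast_nonneg n)) zero_lt_one hb
  simpa [Real.rpow_natCast, neg_mul] using h

lemma tend_real {b : ℝ} (hb : 0 < b) (k : ℕ) :
    Tendsto (fun x : ℝ => x ^ k * Real.exp (-(b * x))) atTop (nhds 0) := by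
  have h := tendsto_rpow_mul_exp_neg_mul_atTop_nhds_zero (k : ℝ) b hb
  simpa [Real.rpow_natCast, neg_mul] using h

lemma cnorm (z : ℂ) (k : ℕ) {t : ℝ} (ht : 0 ≤ t) :
    ‖(t : ℂ) ^ k * Complex.exp (-z * t)‖ = t ^ k * Real.exp (-(z.re * t)) := by
  rw [norm_mul, norm_pow, Complex.norm_real, Real.norm_eq_abs, abs_of_nonneg ht,
    Complex.norm_exp]
  congr 2
  simp [Complex.mul_re]

lemma cint {z : ℂ} (hz : 0 < z.re) (n : ℕ) :
    IntegrableOn (fun t : ℝ => (t : ℂ) ^ n * Complex.exp (-z * t)) (Ioi 0) := by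
  refine Integrable.mono' (real_integrable hz n) ?_ ?_
  · refine Continuous.aestronglyMeasurable ?_
    exact (Complex.continuous_ofReal.pow n).mul
      (Complex.continuous_exp.comp (continuous_const.mul Complex.continuous_ofReal))
  · filter_upwards [ae_restrict_mem measurableSet_Ioi] with t ht
    rw [cnorm z n (le_of_lt ht)]

lemma ctend {z : ℂ} (hz : 0 < z.re) (k : ℕ) :
    Tendsto (fun x : ℝ => (x : ℂ) ^ k * Complex.exp (-z * x)) atTop (nhds 0) := by
  rw [tendsto_zero_iff_norm_tendsto_zero]
  refine (tend_real hz k).congr' ?_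
  filter_upwards [eventually_ge_atTop (0:ℝ)] with x hx
  exact (cnorm z k hx).symm

lemma hderiv_exp (z : ℂ) (x : ℝ) :
    HasDerivAt (fun y : ℝ => Complex.exp (-z * y)) (-z * Complex.exp (-z * x)) x := by
  have h1 : HasDerivAt (fun w : ℂ => Complex.exp (-z * w)) (Complex.exp (-z * x) * -z) (x : ℂ) :=
    (Complex.hasDerivAt_exp (-z * (x:ℂ))).comp (x:ℂ)
      (by simpa using (hasDerivAt_id ((x:ℂ))).const_mul (-z) :
        HasDerivAt (fun w : ℂ => -z * w) (-z) (x:ℂ))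
  have := h1.comp_ofReal
  simpa [mul_comm] using this

lemma cval {z : ℂ} (hz : 0 < z.re) (n : ℕ) :
    ∫ t in Ioi (0:ℝ), (t : ℂ) ^ n * Complex.exp (-z * t)
      = (Nat.factorial n : ℂ) / z ^ (n + 1) := by
  have hz0 : z ≠ 0 := fun h => by simp [h] at hz
  induction n with
  | zero =>
    have hd : ∀ x ∈ Ici (0:ℝ),
        HasDerivAt (fun x : ℝ => -(1/z) * Complex.exp (-z * x))
          ((x : ℂ) ^ 0 * Complex.exp (-z * x)) x := by
      intro x _
      have := (hderiv_exp z x).const_mul (-(1/z))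
      refine this.congr_deriv ?_
      field_simp
    have ht : Tendsto (fun x : ℝ => -(1/z) * Complex.exp (-z * x)) atTop (nhds 0) := by
      have := (ctend hz 0).const_mul (-(1/z))
      simpa using this
    have := integral_Ioi_of_hasDerivAt_of_tendsto' hd (cint hz 0) ht
    rw [this]
    simp
  | succ n ih =>
    set f : ℝ → ℂ := fun x => -(1/z) * ((x : ℂ) ^ (n+1) * Complex.exp (-z * x)) with hf
    set F : ℝ → ℂ := fun x => (x : ℂ) ^ (n+1) * Complex.exp (-z * x)
      - ((n:ℂ)+1)/z * ((x : ℂ) ^ n * Complex.exp (-z * x)) with hF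
    have hd : ∀ x ∈ Ici (0:ℝ), HasDerivAt f (F x) x := by
      intro x _
      have h1 : HasDerivAt (fun y : ℝ => (y : ℂ) ^ (n+1)) (((n:ℂ)+1) * (x:ℂ) ^ n) x := by
        have := (hasDerivAt_pow (n+1) ((x:ℂ))).comp_ofReal
        simpa [Nat.add_sub_cancel] using this
      have := (h1.mul (hderiv_exp z x)).const_mul (-(1/z))
      refine this.congr_deriv ?_
      simp only [hF]
      field_simp
      ring
    have hFint : IntegrableOn F (Ioi 0) :=
      (cint hz (n+1)).sub ((cint hz n).const_mul _)
    have ht : Tendsto f atTop (nhds 0) := by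
      have := (ctend hz (n+1)).const_mul (-(1/z))
      simpa [hf, one_div, neg_mul] using this
    have key := integral_Ioi_of_hasDerivAt_of_tendsto' hd hFint ht
    have hf0 : f 0 = 0 := by simp [hf]
    rw [hf0, sub_zero] at key
    have hsplit : ∫ x in Ioi (0:ℝ), F x
        = (∫ x in Ioi (0:ℝ), (x : ℂ) ^ (n+1) * Complex.exp (-z * x))
          - ((n:ℂ)+1)/z * ∫ x in Ioi (0:ℝ), (x : ℂ) ^ n * Complex.exp (-z * x) := by
      rw [integral_sub (cint hz (n+1)) ((cint hz n).const_mul _), integral_const_mul]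
    rw [hsplit, ih] at key
    have : (∫ x in Ioi (0:ℝ), (x : ℂ) ^ (n+1) * Complex.exp (-z * x))
        = ((n:ℂ)+1)/z * ((Nat.factorial n : ℂ) / z ^ (n+1)) := by
      have := sub_eq_zero.mp key
      exact this
    rw [this, Nat.factorial_succ]
    push_cast
    ring

lemma rval {b : ℝ} (hb : 0 < b) (n : ℕ) :
    ∫ t in Ioi (0:ℝ), t ^ n * Real.exp (-(b * t))
      = (Nat.factorial n : ℝ) / b ^ (n + 1) := by
  have h := Real.integral_rpow_mul_exp_neg_mul_Ioi (a := (n : ℝ) + 1) (by positivity) hb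
  rw [show ((n:ℝ) + 1) - 1 = (n:ℝ) by ring] at h
  simp only [Real.rpow_natCast] at h
  rw [Real.Gamma_nat_eq_factorial] at h
  rw [show ((n:ℝ)+1) = ((n+1 : ℕ) : ℝ) by push_cast; ring, Real.rpow_natCast] at h
  rw [h, one_div, inv_pow, div_eq_mul_inv, mul_comm]

end LTBaux

/-- **Inverse Laplace transform of `e^{−T/z} − 1`** (Lemma 16 in Appendix C of the paper).
For `T ≥ 0`, `Re z > 0`, and `g(t) = Σ_{n≥1} ((−1)^n / n!) T^n t^{n−1} / Γ(n)`,
the function `t ↦ g(t) e^{−zt}` is integrable on `(0,∞)` and its integral is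
`e^{−T/z} − 1`. -/
theorem laplace_transform_bessel_series (T : ℝ) (hT : 0 ≤ T)
    (z : ℂ) (hz : 0 < z.re)
    (g : ℝ → ℝ)
    (hg : ∀ t ∈ Set.Ioi (0 : ℝ), g t = ∑' n : ℕ,
      (-1 : ℝ) ^ (n + 1) / (Nat.factorial (n + 1)) *
        (T ^ (n + 1) * t ^ n / Real.Gamma ((n : ℝ) + 1))) :
    IntegrableOn (fun t : ℝ => (g t : ℂ) * Complex.exp (-z * t)) (Set.Ioi 0) ∧
    ∫ t in Set.Ioi (0 : ℝ), (g t : ℂ) * Complex.exp (-z * t)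
      = Complex.exp (-(T : ℂ) / z) - 1 := by
  open Set Filter LTBaux in
  have hz0 : z ≠ 0 := fun h => by simp [h] at hz
  have hb : 0 < z.re := hz
  set r : ℕ → ℝ := fun n =>
    (-1 : ℝ) ^ (n + 1) / (Nat.factorial (n + 1)) * (T ^ (n + 1) / Nat.factorial n) with hr
  set F : ℕ → ℝ → ℂ := fun n t => (r n : ℂ) * ((t : ℂ) ^ n * Complex.exp (-z * t)) with hF
  have hrabs : ∀ n, |r n| = T ^ (n + 1) / (Nat.factorial (n + 1) * Nat.factorial n) := by
    intro n
    rw [hr]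
    rw [abs_mul, abs_div, abs_div, abs_pow, abs_pow, abs_neg, abs_one, one_pow,
      abs_of_nonneg hT, Nat.abs_cast, Nat.abs_cast, div_mul_div_comm, one_mul]
  have hFint : ∀ n, Integrable (F n) (volume.restrict (Set.Ioi 0)) := fun n =>
    ((LTBaux.cint hz n).const_mul _)
  have hFnormpt : ∀ n, ∀ t : ℝ, 0 ≤ t →
      ‖F n t‖ = |r n| * (t ^ n * Real.exp (-(z.re * t))) := by
    intro n t ht
    rw [hF]
    rw [norm_mul, Complex.norm_real, Real.norm_eq_abs, LTBaux.cnorm z n ht]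
  have hFnorm : ∀ n, ∫ t in Set.Ioi (0:ℝ), ‖F n t‖
      = (T / z.re) ^ (n + 1) / Nat.factorial (n + 1) := by
    intro n
    have h1 : ∫ t in Set.Ioi (0:ℝ), ‖F n t‖
        = ∫ t in Set.Ioi (0:ℝ), |r n| * (t ^ n * Real.exp (-(z.re * t))) := by
      refine setIntegral_congr_fun measurableSet_Ioi fun t ht => ?_
      exact hFnormpt n t (le_of_lt ht)
    rw [h1, integral_const_mul, LTBaux.rval hb n, hrabs n]
    have h4 : (Nat.factorial n : ℝ) ≠ 0 := by exact_mod_cast Nat.factorial_ne_zero n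
    have h5 : (Nat.factorial (n+1) : ℝ) ≠ 0 := by exact_mod_cast Nat.factorial_ne_zero (n+1)
    have h6 : z.re ≠ 0 := ne_of_gt hb
    rw [div_pow]
    field_simp
  have hFsum : Summable (fun n => ∫ t in Set.Ioi (0:ℝ), ‖F n t‖) := by
    have h2 : Summable (fun n : ℕ => (T / z.re) ^ (n + 1) / Nat.factorial (n + 1)) :=
      (Real.summable_pow_div_factorial (T / z.re)).comp_injective Nat.succ_injective
    exact (summable_congr fun n => (hFnorm n)).mpr h2
  have hsummable : ∀ t : ℝ, Summable (fun n => F n t) := by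
    intro t
    apply Summable.of_norm
    have hb2 : Summable (fun n : ℕ =>
        (T * Real.exp ((-z * t).re)) * ((T * |t|) ^ n / Nat.factorial n)) :=
      (Real.summable_pow_div_factorial (T * |t|)).mul_left _
    refine Summable.of_nonneg_of_le (fun n => norm_nonneg _) (fun n => ?_) hb2
    have hnorm : ‖F n t‖ = |r n| * (|t| ^ n * Real.exp ((-z * t).re)) := by
      rw [hF]
      rw [norm_mul, Complex.norm_real, Real.norm_eq_abs, norm_mul, norm_pow,
        Complex.norm_real, Real.norm_eq_abs, Complex.norm_exp]
    have hfac1 : (1:ℝ) ≤ Nat.factorial (n+1) := by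
      exact_mod_cast Nat.one_le_iff_ne_zero.mpr (Nat.factorial_ne_zero _)
    have hfacn : (0:ℝ) < Nat.factorial n := by exact_mod_cast Nat.factorial_pos n
    have h3 : |r n| ≤ T * T ^ n / Nat.factorial n := by
      rw [hrabs n]
      have : T ^ (n+1) / (↑(Nat.factorial (n+1)) * ↑(Nat.factorial n))
          ≤ T ^ (n+1) / ↑(Nat.factorial n) := by
        apply div_le_div_of_nonneg_left (by positivity) hfacn
        exact le_mul_of_one_le_left hfacn.le hfac1
      calc T ^ (n+1) / (↑(Nat.factorial (n+1)) * ↑(Nat.factorial n))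
          ≤ T ^ (n+1) / ↑(Nat.factorial n) := this
        _ = T * T ^ n / ↑(Nat.factorial n) := by rw [pow_succ]; ring
    calc ‖F n t‖ = |r n| * (|t| ^ n * Real.exp ((-z * t).re)) := hnorm
      _ ≤ (T * T ^ n / ↑(Nat.factorial n)) * (|t| ^ n * Real.exp ((-z * t).re)) := by
          apply mul_le_mul_of_nonneg_right h3 (by positivity)
      _ = T * Real.exp ((-z * ↑t).re) * ((T * |t|) ^ n / ↑(Nat.factorial n)) := by
          rw [mul_pow]; ring
  have heq : ∀ t ∈ Set.Ioi (0:ℝ), (g t : ℂ) * Complex.exp (-z * t) = ∑' n, F n t := by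
    intro t ht
    rw [hg t ht]
    have hga : (fun n : ℕ => (-1 : ℝ) ^ (n + 1) / (Nat.factorial (n + 1)) *
        (T ^ (n + 1) * t ^ n / Real.Gamma ((n : ℝ) + 1)))
        = fun n : ℕ => r n * t ^ n := by
      funext n
      rw [Real.Gamma_nat_eq_factorial, hr]
      ring
    rw [hga, Complex.ofReal_tsum, ← tsum_mul_right]
    refine tsum_congr fun n => ?_
    rw [hF]
    push_cast
    ring
  have hkey := hasSum_integral_of_summable_integral_norm hFint hFsum
  have hIval : ∀ n, ∫ t in Set.Ioi (0:ℝ), F n t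
      = (-(T:ℂ)/z) ^ (n + 1) / Nat.factorial (n + 1) := by
    intro n
    rw [hF]
    rw [integral_const_mul, LTBaux.cval hz n, hr]
    have hfacn : ((Nat.factorial n : ℂ)) ≠ 0 := by exact_mod_cast (Nat.factorial_ne_zero n)
    have hfacn1 : ((Nat.factorial (n+1) : ℂ)) ≠ 0 := by exact_mod_cast (Nat.factorial_ne_zero (n+1))
    push_cast
    rw [div_pow, neg_pow]
    field_simp
    ring
  have hexp : HasSum (fun n : ℕ => (-(T:ℂ)/z) ^ (n + 1) / Nat.factorial (n + 1))
      (Complex.exp (-(T:ℂ)/z) - 1) := by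
    have h := NormedSpace.expSeries_div_hasSum_exp (-(T:ℂ)/z)
    rw [← Complex.exp_eq_exp_ℂ] at h
    have h2 := (hasSum_nat_add_iff'
      (f := fun n : ℕ => (-(T:ℂ)/z) ^ n / Nat.factorial n) 1).mpr h
    simpa using h2
  have htsumInt : Integrable (fun t => ∑' n, F n t) (volume.restrict (Set.Ioi 0)) := by
    constructor
    · refine aestronglyMeasurable_of_tendsto_ae atTop
        (f := fun N t => ∑ n ∈ Finset.range N, F n t) (fun N => ?_) ?_
      · exact (Finset.aestronglyMeasurable_fun_sum _ fun n _ => (hFint n).1)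
      · filter_upwards with t
        exact (hsummable t).hasSum.tendsto_sum_nat
    · have step1 : ∀ t : ℝ, (‖∑' n, F n t‖₊ : ENNReal) ≤ ∑' n, (‖F n t‖₊ : ENNReal) := by
        intro t
        have hs : Summable fun n => ‖F n t‖₊ := by
          rw [← NNReal.summable_coe]
          exact (hsummable t).norm
        rw [← ENNReal.coe_tsum hs]
        exact_mod_cast nnnorm_tsum_le hs
      calc ∫⁻ t, ‖∑' n, F n t‖₊ ∂(volume.restrict (Set.Ioi 0))
          ≤ ∫⁻ t, ∑' n, (‖F n t‖₊ : ENNReal) ∂(volume.restrict (Set.Ioi 0)) :=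
            lintegral_mono fun t => step1 t
        _ = ∑' n, ∫⁻ t, (‖F n t‖₊ : ENNReal) ∂(volume.restrict (Set.Ioi 0)) :=
            lintegral_tsum fun n => (hFint n).1.enorm
        _ = ∑' n, ENNReal.ofReal (∫ t in Set.Ioi (0:ℝ), ‖F n t‖) := by
            refine tsum_congr fun n => ?_
            exact (ofReal_integral_norm_eq_lintegral_enorm (hFint n)).symm
        _ = ENNReal.ofReal (∑' n, ∫ t in Set.Ioi (0:ℝ), ‖F n t‖) :=
            (ENNReal.ofReal_tsum_of_nonneg
              (fun n => integral_nonneg fun t => norm_nonneg _) hFsum).symm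
        _ < ⊤ := ENNReal.ofReal_lt_top
  have hIntOn : IntegrableOn (fun t : ℝ => (g t : ℂ) * Complex.exp (-z * t)) (Set.Ioi 0) := by
    refine IntegrableOn.congr_fun htsumInt (fun t ht => (heq t ht).symm) measurableSet_Ioi
  refine ⟨hIntOn, ?_⟩
  have hval : ∫ t in Set.Ioi (0:ℝ), (g t : ℂ) * Complex.exp (-z * t)
      = ∫ t in Set.Ioi (0:ℝ), ∑' n, F n t :=
    setIntegral_congr_fun measurableSet_Ioi heq
  rw [hval]
  simp only [hIval] at hkey
  exact hkey.unique hexp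
end

section
/- Let T ≥ 0 and z ∈ ℂ with Re z > 0, and define g(t) = Σ_{n=1}^∞ ((−1)^n T^n / n!) · (t^{n/2−1} / Γ(n/2)) for t > 0 (the series converges absolutely). Then t ↦ g(t) e^{−zt} is integrable on (0,∞) and ∫_0^∞ g(t) e^{−zt} dt = e^{−T/√z} − 1, where √z denotes the principal branch of the square root. -/
open MeasureTheory Set Filter Topology

namespace LapAux


lemma contOn_cpow (c : ℂ) : ContinuousOn (fun t : ℝ => (t:ℂ) ^ c) (Ioi 0) := fun t ht =>
  (Complex.continuousAt_ofReal_cpow_const t c (Or.inr (ne_of_gt ht))).continuousWithinAt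

lemma measK (a : ℝ) (z : ℂ) :
    AEStronglyMeasurable (fun t : ℝ => (t:ℂ) ^ ((a:ℂ) - 1) * Complex.exp (-z * t))
      (volume.restrict (Ioi 0)) :=
  ((contOn_cpow _).mul (Continuous.continuousOn (by fun_prop))).aestronglyMeasurable
    measurableSet_Ioi

lemma norm_integrand {a : ℝ} (z : ℂ) {t : ℝ} (ht : 0 < t) :
    ‖(t:ℂ) ^ ((a:ℂ) - 1) * Complex.exp (-z * t)‖ = t ^ (a - 1) * Real.exp (-z.re * t) := by
  rw [norm_mul, Complex.norm_exp,
    Complex.norm_cpow_eq_rpow_re_of_pos ht]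
  have h1 : ((a:ℂ) - 1).re = a - 1 := by simp
  have h2 : (-z * (t:ℂ)).re = -z.re * t := by simp [Complex.neg_re, Complex.mul_re]
  rw [h1, h2]

lemma intOn_real {a r : ℝ} (ha : 0 < a) (hr : 0 < r) :
    IntegrableOn (fun t : ℝ => t ^ (a - 1) * Real.exp (-r * t)) (Ioi 0) := by
  have h := integrableOn_rpow_mul_exp_neg_mul_rpow (p := 1) (s := a - 1) (by linarith) one_pos hr
  refine h.congr_fun (fun x hx => ?_) measurableSet_Ioi
  simp only [Real.rpow_one]

lemma intOn_complex {a : ℝ} (ha : 0 < a) {z : ℂ} (hz : 0 < z.re) :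
    IntegrableOn (fun t : ℝ => (t:ℂ) ^ ((a:ℂ) - 1) * Complex.exp (-z * t)) (Ioi 0) := by
  refine ((intOn_real ha hz).mono' (measK a z) ?_)
  filter_upwards [ae_restrict_mem measurableSet_Ioi] with t ht
  rw [norm_integrand z ht]

lemma laplace_cpow {a : ℝ} (ha : 0 < a) {z : ℂ} (hz : 0 < z.re) :
    ∫ t in Ioi (0:ℝ), (t:ℂ) ^ ((a:ℂ) - 1) * Complex.exp (-z * t)
      = Complex.Gamma a * z ^ (-(a:ℂ)) := by
  set U : Set ℂ := {w | 0 < w.re} with hUdef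
  have hU : IsOpen U := isOpen_lt continuous_const Complex.continuous_re
  have hUconn : IsPreconnected U := (convex_halfSpace_re_gt 0).isPreconnected
  set f : ℂ → ℂ := fun w => ∫ t in Ioi (0:ℝ), (t:ℂ) ^ ((a:ℂ) - 1) * Complex.exp (-w * t) with hfdef
  set g : ℂ → ℂ := fun w => Complex.Gamma a * w ^ (-(a:ℂ)) with hgdef
  have hf : DifferentiableOn ℂ f U := by
    intro z₀ hz₀
    have hz₀' : 0 < z₀.re := hz₀
    set ε : ℝ := z₀.re / 2 with hε
    have hεpos : 0 < ε := by positivity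
    have key := hasDerivAt_integral_of_dominated_loc_of_deriv_le (μ := volume.restrict (Ioi 0))
      (F := fun w t => (t:ℂ) ^ ((a:ℂ) - 1) * Complex.exp (-w * t))
      (F' := fun w t => (t:ℂ) ^ ((a:ℂ) - 1) * (Complex.exp (-w * t) * -(t:ℂ)))
      (x₀ := z₀) (bound := fun t => t ^ (a + 1 - 1) * Real.exp (-ε * t)) (Metric.ball_mem_nhds z₀ hεpos)
      (Eventually.of_forall fun w => measK a w) (intOn_complex ha hz₀') ?_ ?_
      (intOn_real (by linarith) hεpos) ?_
    · exact (key.2.differentiableAt).differentiableWithinAt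
    · -- measurability of F' z₀
      refine (((contOn_cpow _).mul (Continuous.continuousOn (by fun_prop))).aestronglyMeasurable
        measurableSet_Ioi)
    · -- bound
      filter_upwards [ae_restrict_mem measurableSet_Ioi] with t ht
      intro w hw
      have hwre : ε ≤ w.re := by
        have hd : dist w z₀ < ε := Metric.mem_ball.mp hw
        rw [Complex.dist_eq] at hd
        have : |w.re - z₀.re| < ε :=
          lt_of_le_of_lt (by simpa using Complex.abs_re_le_norm (w - z₀)) hd
        have := abs_lt.mp this
        simp only [hε] at *
        linarith [this.1]
      rw [norm_mul, norm_mul,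
        Complex.norm_cpow_eq_rpow_re_of_pos ht]
      have h1 : ‖Complex.exp (-w * t)‖ = Real.exp (-w.re * t) := by
        rw [Complex.norm_exp]
        congr 1
        simp [Complex.neg_re, Complex.mul_re]
      have h2 : ‖(-(t:ℂ))‖ = t := by
        simp [abs_of_pos (mem_Ioi.mp ht), (mem_Ioi.mp ht).le]
      rw [h1, h2]
      have hre : ((a:ℂ) - 1).re = a - 1 := by simp
      rw [hre]
      have : t ^ (a - 1) * (Real.exp (-w.re * t) * t) = t ^ (a + 1 - 1) * Real.exp (-w.re * t) := by
        rw [show a + 1 - 1 = (a - 1) + 1 by ring, Real.rpow_add ht, Real.rpow_one]; ring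
      rw [this]
      refine mul_le_mul_of_nonneg_left (Real.exp_le_exp.mpr ?_) (Real.rpow_nonneg ht.le _)
      have := mul_le_mul_of_nonneg_right (neg_le_neg hwre) ht.le
      linarith
    · -- differentiability statement
      filter_upwards with t
      intro w hw
      have h1 : HasDerivAt (fun w : ℂ => -w * t) (-(t:ℂ)) w := by
        simpa using ((hasDerivAt_id w).neg.mul_const (t:ℂ))
      exact (h1.cexp).const_mul _
  have hg : DifferentiableOn ℂ g U := by
    intro w hw
    have hws : w ∈ Complex.slitPlane := Or.inl hw
    exact ((differentiableAt_id.cpow (differentiableAt_const _) hws).const_mul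
      _).differentiableWithinAt
  have hreal : ∀ r : ℝ, 0 < r → f r = g r := by
    intro r hr
    have := Complex.integral_cpow_mul_exp_neg_mul_Ioi
      (a := (a:ℂ)) (r := r) (by simpa using ha) hr
    rw [hfdef]
    simp only
    rw [show (fun t : ℝ => (t:ℂ) ^ ((a:ℂ) - 1) * Complex.exp (-(r:ℂ) * t))
        = (fun t : ℝ => (t:ℂ) ^ ((a:ℂ) - 1) * Complex.exp (-((r:ℂ) * t))) by
        funext t; rw [neg_mul], this, hgdef]
    simp only
    rw [mul_comm]
    congr 1
    rw [one_div, Complex.inv_cpow _ _ (by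
      rw [Complex.arg_ofReal_of_nonneg hr.le]; exact Real.pi_ne_zero.symm), ← Complex.cpow_neg]
  have h1U : (1:ℂ) ∈ U := by simp [hUdef]
  have hfreq : ∃ᶠ w in 𝓝[≠] (1:ℂ), f w = g w := by
    have ht1 : Tendsto (fun n : ℕ => (1 + (1:ℝ)/(n+1))) atTop (𝓝 1) := by
      have := tendsto_one_div_add_atTop_nhds_zero_nat (𝕜 := ℝ)
      simpa using tendsto_const_nhds.add this
    have ht2 : Tendsto (fun n : ℕ => ((1 + (1:ℝ)/(n+1) : ℝ) : ℂ)) atTop (𝓝 (1:ℂ)) := by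
      have := (Complex.continuous_ofReal.tendsto 1).comp ht1
      simpa [Function.comp_def] using this
    have ht3 : Tendsto (fun n : ℕ => ((1 + (1:ℝ)/(n+1) : ℝ) : ℂ)) atTop (𝓝[≠] (1:ℂ)) := by
      refine tendsto_nhdsWithin_of_tendsto_nhds_of_eventually_within _ ht2 ?_
      filter_upwards with n
      simp only [mem_compl_iff, mem_singleton_iff]
      intro h
      have : (1 + (1:ℝ)/(n+1)) = 1 := by exact_mod_cast h
      have hpos : (0:ℝ) < 1/(n+1) := by positivity
      linarith
    exact ht3.frequently (Frequently.of_forall fun n => hreal _ (by positivity))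
  have := ((hf.analyticOnNhd hU).eqOn_of_preconnected_of_frequently_eq
    (hg.analyticOnNhd hU) hUconn h1U hfreq)
  exact this hz



lemma integrable_tsum_of_summable {F : ℕ → ℝ → ℂ} {μ : Measure ℝ}
    (hint : ∀ n, Integrable (F n) μ)
    (hsum : Summable fun n => ∫ a, ‖F n a‖ ∂μ) :
    Integrable (fun a => ∑' n, F n a) μ := by
  have hφmeas : ∀ n, AEMeasurable (fun a => (‖F n a‖₊ : ENNReal)) μ := fun n => (hint n).1.enorm
  have hlin : ∀ n, ∫⁻ a, (‖F n a‖₊ : ENNReal) ∂μ = ENNReal.ofReal (∫ a, ‖F n a‖ ∂μ) := by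
    intro n
    simpa using lintegral_coe_eq_integral (fun a => ‖F n a‖₊) (by simpa using (hint n).norm)
  have hne : ∑' n, ∫⁻ a, (‖F n a‖₊ : ENNReal) ∂μ ≠ ⊤ := by
    simp_rw [hlin]
    rw [← ENNReal.ofReal_tsum_of_nonneg (fun n => integral_nonneg fun a => norm_nonneg _) hsum]
    exact ENNReal.ofReal_ne_top
  have hae : ∀ᵐ a ∂μ, Summable fun n => ‖F n a‖ := by
    rw [← lintegral_tsum hφmeas] at hne
    refine (ae_lt_top' (AEMeasurable.ennreal_tsum hφmeas) hne).mono fun a ha => ?_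
    have := ENNReal.tsum_coe_ne_top_iff_summable_coe.mp ha.ne
    simpa [coe_nnnorm] using this
  constructor
  · refine aestronglyMeasurable_of_tendsto_ae atTop
      (fun k => Finset.aestronglyMeasurable_sum (Finset.range k) (fun n _ => (hint n).1)) ?_
    filter_upwards [hae] with a ha
    simpa only [Finset.sum_apply] using (ha.of_norm).hasSum.tendsto_sum_nat
  · show (∫⁻ a, (‖∑' n, F n a‖₊ : ENNReal) ∂μ) < ⊤
    calc ∫⁻ a, (‖∑' n, F n a‖₊ : ENNReal) ∂μ
        ≤ ∫⁻ a, ∑' n, (‖F n a‖₊ : ENNReal) ∂μ := by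
          refine lintegral_mono_ae ?_
          filter_upwards [hae] with a ha
          have ha' : Summable fun n => ‖F n a‖₊ := by
            rw [← NNReal.summable_coe]; simpa [coe_nnnorm] using ha
          rw [← ENNReal.coe_tsum ha']
          refine ENNReal.coe_le_coe.mpr ?_
          have h1 : ‖∑' n, F n a‖ ≤ ∑' n, ‖F n a‖ := norm_tsum_le_tsum_norm ha
          have h2 : ((∑' n, ‖F n a‖₊ : NNReal) : ℝ) = ∑' n, ‖F n a‖ := by
            rw [NNReal.coe_tsum]; simp [coe_nnnorm]
          rw [← NNReal.coe_le_coe, h2, coe_nnnorm]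
          exact h1
      _ = ∑' n, ∫⁻ a, (‖F n a‖₊ : ENNReal) ∂μ := lintegral_tsum hφmeas
      _ < ⊤ := hne.lt_top



noncomputable def ee (n : ℕ) : ℝ := ((n:ℝ)+1)/2

lemma ee_pos (n : ℕ) : 0 < ee n := by unfold ee; positivity

noncomputable def cc (T : ℝ) (n : ℕ) : ℝ :=
  (-1:ℝ)^(n+1) * T^(n+1) / (Nat.factorial (n+1)) / Real.Gamma (ee n)

noncomputable def FF (T : ℝ) (z : ℂ) (n : ℕ) (t : ℝ) : ℂ :=
  (cc T n : ℂ) * ((t:ℂ) ^ ((ee n : ℂ) - 1) * Complex.exp (-z * t))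


end LapAux


set_option maxHeartbeats 1000000 in
/-- **Inverse Laplace transform of `e^{−T/√z} − 1`** (Lemma 17 in Appendix C of the
paper). For `T ≥ 0`, `Re z > 0`, and
`g(t) = Σ_{n≥1} ((−1)^n T^n / n!) t^{n/2−1} / Γ(n/2)`, the function `t ↦ g(t) e^{−zt}` is
integrable on `(0,∞)` and its integral equals `e^{−T/√z} − 1`, with the principal branch
of the square root. -/
theorem laplace_transform_half_power_series (T : ℝ) (hT : 0 ≤ T)
    (z : ℂ) (hz : 0 < z.re)
    (g : ℝ → ℝ)
    (hg : ∀ t ∈ Set.Ioi (0 : ℝ), g t = ∑' n : ℕ,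
      (-1 : ℝ) ^ (n + 1) * T ^ (n + 1) / (Nat.factorial (n + 1)) *
        (t ^ (((n : ℝ) + 1) / 2 - 1) / Real.Gamma (((n : ℝ) + 1) / 2))) :
    IntegrableOn (fun t : ℝ => (g t : ℂ) * Complex.exp (-z * t)) (Set.Ioi 0) ∧
    ∫ t in Set.Ioi (0 : ℝ), (g t : ℂ) * Complex.exp (-z * t)
      = Complex.exp (-(T : ℂ) / z ^ (1 / 2 : ℂ)) - 1 := by
  have hrpos : 0 < z.re := hz
  set q : ℝ := (1 / z.re) ^ ((1:ℝ)/2) with hqdef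
  have hFint : ∀ n, Integrable (LapAux.FF T z n) (volume.restrict (Ioi 0)) := fun n =>
    (LapAux.intOn_complex (LapAux.ee_pos n) hz).const_mul _
  -- exact value of the integrals of norms
  have hIn : ∀ n, ∫ t in Ioi (0:ℝ), ‖LapAux.FF T z n t‖
      = (T*q)^(n+1) / (Nat.factorial (n+1)) := by
    intro n
    have h1 : ∫ t in Ioi (0:ℝ), ‖LapAux.FF T z n t‖
        = |LapAux.cc T n| * ∫ t in Ioi (0:ℝ), t ^ (LapAux.ee n - 1) * Real.exp (-(z.re * t)) := by
      rw [← integral_const_mul]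
      refine setIntegral_congr_fun measurableSet_Ioi (fun t ht => ?_)
      unfold LapAux.FF
      rw [norm_mul, Complex.norm_real, Real.norm_eq_abs, LapAux.norm_integrand z ht, neg_mul]
    rw [h1, Real.integral_rpow_mul_exp_neg_mul_Ioi (LapAux.ee_pos n) hrpos]
    have habs : |LapAux.cc T n| = T^(n+1) / (Nat.factorial (n+1)) / Real.Gamma (LapAux.ee n) := by
      unfold LapAux.cc
      rw [abs_div, abs_div, abs_mul, abs_pow, abs_pow, abs_neg, abs_one, one_pow, one_mul,
        abs_of_nonneg hT, Nat.abs_cast, abs_of_pos (Real.Gamma_pos_of_pos (LapAux.ee_pos n))]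
    have hq : (1 / z.re) ^ (LapAux.ee n) = q^(n+1) := by
      rw [hqdef, show LapAux.ee n = ((1:ℝ)/2) * ((n+1:ℕ):ℝ) by unfold LapAux.ee; push_cast; ring,
        Real.rpow_mul (by positivity), Real.rpow_natCast]
    rw [habs, hq, mul_pow]
    have hΓ : Real.Gamma (LapAux.ee n) ≠ 0 := (Real.Gamma_pos_of_pos (LapAux.ee_pos n)).ne'
    field_simp
  -- summability of integrals of norms
  have hsum : Summable fun n => ∫ t in Ioi (0:ℝ), ‖LapAux.FF T z n t‖ := by
    simp_rw [hIn]
    exact (summable_nat_add_iff 1).mpr (Real.summable_pow_div_factorial (T*q))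
  -- pointwise identification
  have hpt : ∀ t ∈ Ioi (0:ℝ), (g t : ℂ) * Complex.exp (-z * t) = ∑' n, LapAux.FF T z n t := by
    intro t ht
    rw [hg t ht, Complex.ofReal_tsum, ← tsum_mul_right]
    refine tsum_congr (fun n => ?_)
    have hterm : (-1 : ℝ) ^ (n + 1) * T ^ (n + 1) / (Nat.factorial (n + 1)) *
        (t ^ (((n : ℝ) + 1) / 2 - 1) / Real.Gamma (((n : ℝ) + 1) / 2))
        = LapAux.cc T n * t ^ (LapAux.ee n - 1) := by
      unfold LapAux.cc LapAux.ee
      ring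
    rw [hterm]
    unfold LapAux.FF
    rw [Complex.ofReal_mul, Complex.ofReal_cpow ht.le, mul_assoc]
    congr 2
    push_cast
    ring
  have haeEq : (fun t : ℝ => (g t : ℂ) * Complex.exp (-z * t))
      =ᵐ[volume.restrict (Ioi 0)] (fun t => ∑' n, LapAux.FF T z n t) := by
    filter_upwards [ae_restrict_mem measurableSet_Ioi] with t ht
    exact hpt t ht
  have hS : Integrable (fun t => ∑' n, LapAux.FF T z n t) (volume.restrict (Ioi 0)) :=
    LapAux.integrable_tsum_of_summable hFint hsum
  refine ⟨hS.congr haeEq.symm, ?_⟩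
  rw [integral_congr_ae haeEq,
    ← integral_tsum_of_summable_integral_norm hFint hsum]
  -- value of each integral
  set w : ℂ := -(T:ℂ) * (z ^ ((1:ℂ)/2))⁻¹ with hwdef
  have hval : ∀ n, ∫ t in Ioi (0:ℝ), LapAux.FF T z n t
      = w^(n+1) / (Nat.factorial (n+1)) := by
    intro n
    unfold LapAux.FF
    rw [integral_const_mul, LapAux.laplace_cpow (LapAux.ee_pos n) hz, Complex.Gamma_ofReal]
    have hcp : (z:ℂ) ^ (-((LapAux.ee n : ℝ):ℂ)) = ((z ^ ((1:ℂ)/2))⁻¹)^(n+1) := by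
      rw [show ((LapAux.ee n : ℝ):ℂ) = ((n+1:ℕ):ℂ) * ((1:ℂ)/2) by
          unfold LapAux.ee; push_cast; ring,
        Complex.cpow_neg, Complex.cpow_nat_mul, ← inv_pow]
    rw [hcp]
    have hΓne : ((Real.Gamma (LapAux.ee n) : ℝ) : ℂ) ≠ 0 := by
      exact_mod_cast (Real.Gamma_pos_of_pos (LapAux.ee_pos n)).ne'
    unfold LapAux.cc
    have key : ∀ (x u y : ℂ), y ≠ 0 → (x / y) * (y * u) = x * u := by
      intro x u y hy; field_simp
    rw [Complex.ofReal_div, key _ _ _ hΓne, Complex.ofReal_div, div_mul_eq_mul_div]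
    congr 1
    rw [hwdef, show (-(T:ℂ)) * (z ^ ((1:ℂ)/2))⁻¹ = (-1) * ((T:ℂ) * (z ^ ((1:ℂ)/2))⁻¹) from by ring,
      mul_pow, mul_pow]
    push_cast
    ring
  simp_rw [hval]
  -- sum the exponential series
  have hwsum : Summable (fun m : ℕ => w^m / (Nat.factorial m : ℂ)) := by
    refine Summable.of_norm ?_
    have := Real.summable_pow_div_factorial ‖w‖
    refine this.congr (fun m => ?_)
    simp [norm_div, norm_pow]
  have hexp : Complex.exp w = ∑' m : ℕ, w^m / (Nat.factorial m : ℂ) := by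
    rw [Complex.exp_eq_exp_ℂ, NormedSpace.exp_eq_tsum_div]
  have hzero := Summable.tsum_eq_zero_add hwsum
  rw [pow_zero, Nat.factorial_zero, Nat.cast_one, div_one] at hzero
  have : ∑' n : ℕ, w^(n+1) / (Nat.factorial (n+1) : ℂ) = Complex.exp w - 1 := by
    rw [hexp, hzero]; ring
  rw [this, hwdef, ← div_eq_mul_inv]
end

section
/- Let T ≥ 0 and z ∈ ℂ with Re z > 0, and define g(t) = Σ_{n=0}^∞ ((−1)^n T^n t^n / (n!)²) for t > 0 (the series converges absolutely). Then t ↦ g(t) e^{−zt} is integrable on (0,∞) and ∫_0^∞ g(t) e^{−zt} dt = (1/z) e^{−T/z}. -/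
set_option linter.dupNamespace false
open MeasureTheory Set Filter Asymptotics Topology

namespace LTBessel


lemma int_real (n : ℕ) {c : ℝ} (hc : 0 < c) :
    IntegrableOn (fun t : ℝ => t ^ n * Real.exp (-c * t)) (Ioi 0) := by
  apply integrable_of_isBigO_exp_neg (half_pos hc)
    (Continuous.continuousOn (by continuity))
  have h := tendsto_rpow_mul_exp_neg_mul_atTop_nhds_zero n (c/2) (half_pos hc)
  have h2 : Tendsto (fun t : ℝ => t ^ n * Real.exp (-c * t) / Real.exp (-(c/2) * t))
      atTop (𝓝 0) := by
    refine h.congr' ?_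
    filter_upwards [eventually_gt_atTop (0:ℝ)] with t ht
    rw [Real.rpow_natCast, mul_div_assoc, ← Real.exp_sub]
    ring_nf
  exact ((Asymptotics.isLittleO_iff_tendsto fun t h =>
    absurd h (Real.exp_ne_zero _)).mpr h2).isBigO

lemma norm_exp_neg (z : ℂ) (t : ℝ) :
    ‖Complex.exp (-z * t)‖ = Real.exp (-z.re * t) := by
  rw [Complex.norm_exp]
  congr 1
  simp [Complex.mul_re]

lemma int_c (n : ℕ) {z : ℂ} (hz : 0 < z.re) :
    IntegrableOn (fun t : ℝ => (t:ℂ) ^ n * Complex.exp (-z * t)) (Ioi 0) := by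
  refine (int_real n hz).mono' ?_ ?_
  · exact (Continuous.aestronglyMeasurable (by continuity)).restrict
  · rw [ae_restrict_iff' measurableSet_Ioi]
    filter_upwards with t ht
    rw [norm_mul, norm_pow, Complex.norm_real, Real.norm_of_nonneg ht.out.le, norm_exp_neg]

lemma tend (k : ℕ) {z : ℂ} (hz : 0 < z.re) :
    Tendsto (fun t : ℝ => (t:ℂ) ^ k * Complex.exp (-z * t)) atTop (𝓝 0) := by
  rw [tendsto_zero_iff_norm_tendsto_zero]
  have h := tendsto_rpow_mul_exp_neg_mul_atTop_nhds_zero k z.re hz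
  refine h.congr' ?_
  filter_upwards [eventually_gt_atTop (0:ℝ)] with t ht
  rw [norm_mul, norm_pow, Complex.norm_real, Real.norm_of_nonneg ht.le,
    norm_exp_neg, Real.rpow_natCast]

lemma hder (k : ℕ) (z : ℂ) (t : ℝ) :
    HasDerivAt (fun s : ℝ => (s:ℂ) ^ k * Complex.exp (-z * s))
      (((k:ℂ) * (t:ℂ) ^ (k-1) - z * (t:ℂ) ^ k) * Complex.exp (-z * t)) t := by
  have h : HasDerivAt (fun w : ℂ => w ^ k * Complex.exp (-z * w))
      ((k:ℂ) * (t:ℂ) ^ (k-1) * Complex.exp (-z * t)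
        + (t:ℂ) ^ k * (Complex.exp (-z * t) * (-z * 1))) (t:ℂ) :=
    (hasDerivAt_pow k _).mul (((hasDerivAt_id _).const_mul (-z)).cexp)
  have h2 := h.comp_ofReal
  convert h2 using 1
  ring

lemma key (k : ℕ) {z : ℂ} (hz : 0 < z.re) :
    (k:ℂ) * (∫ t in Ioi (0:ℝ), (t:ℂ) ^ (k-1) * Complex.exp (-z * t))
      - z * (∫ t in Ioi (0:ℝ), (t:ℂ) ^ k * Complex.exp (-z * t))
      = -((0:ℂ) ^ k) := by
  have hint : IntegrableOn
      (fun t : ℝ => ((k:ℂ) * (t:ℂ) ^ (k-1) - z * (t:ℂ) ^ k) * Complex.exp (-z * t))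
      (Ioi 0) := by
    have h := ((int_c (k-1) hz).const_mul (k:ℂ)).sub ((int_c k hz).const_mul z)
    refine h.congr (Eventually.of_forall fun t => ?_)
    simp only [Pi.sub_apply]
    ring
  have h := integral_Ioi_of_hasDerivAt_of_tendsto
    (f := fun t : ℝ => (t:ℂ) ^ k * Complex.exp (-z * t))
    (f' := fun t : ℝ => ((k:ℂ) * (t:ℂ) ^ (k-1) - z * (t:ℂ) ^ k) * Complex.exp (-z * t))
    (Continuous.continuousWithinAt (by continuity))
    (fun t _ => hder k z t) hint (tend k hz)
  rw [show (fun t : ℝ => ((k:ℂ) * (t:ℂ) ^ (k-1) - z * (t:ℂ) ^ k) * Complex.exp (-z * t))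
      = (fun t : ℝ => (k:ℂ) * ((t:ℂ) ^ (k-1) * Complex.exp (-z * t))
        - z * ((t:ℂ) ^ k * Complex.exp (-z * t))) from funext fun t => by ring] at h
  rw [integral_sub ((int_c (k-1) hz).const_mul _) ((int_c k hz).const_mul _),
    integral_const_mul, integral_const_mul] at h
  rw [h]
  norm_num

lemma Jval {z : ℂ} (hz : 0 < z.re) (n : ℕ) :
    ∫ t in Ioi (0:ℝ), (t:ℂ) ^ n * Complex.exp (-z * t)
      = (n.factorial : ℂ) / z ^ (n+1) := by
  have hz0 : z ≠ 0 := fun h => by simp [h] at hz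
  induction n with
  | zero =>
      have h := key 0 hz
      simp only [Nat.cast_zero, zero_mul, pow_zero, zero_sub, neg_inj] at h
      rw [pow_one, eq_div_iff hz0]
      simpa [mul_comm] using h
  | succ n ih =>
      have h := key (n+1) hz
      simp only [Nat.add_sub_cancel, ih, show ((0:ℂ)) ^ (n+1) = 0 by simp, neg_zero,
        sub_eq_zero] at h
      have h2 := congrArg (· * z ^ (n+1)) h
      simp only [mul_assoc, div_mul_cancel₀ _ (pow_ne_zero (n+1) hz0)] at h2
      rw [eq_div_iff (pow_ne_zero _ hz0)]
      push_cast [Nat.factorial_succ] at h2 ⊢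
      linear_combination -h2


lemma int_val (n : ℕ) {c : ℝ} (hc : 0 < c) :
    ∫ t in Ioi (0:ℝ), t ^ n * Real.exp (-c * t) = n.factorial / c ^ (n+1) := by
  have h := Real.integral_rpow_mul_exp_neg_mul_Ioi (a := (n:ℝ)+1) (by positivity) hc
  rw [show ((n:ℝ)+1) - 1 = (n:ℝ) by ring] at h
  rw [show (∫ t in Ioi (0:ℝ), t ^ n * Real.exp (-c * t))
      = ∫ t in Ioi (0:ℝ), t ^ (n:ℝ) * Real.exp (-(c * t)) from
    setIntegral_congr_fun measurableSet_Ioi (fun t ht => by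
      rw [Real.rpow_natCast, neg_mul]), h]
  rw [Real.Gamma_nat_eq_factorial,
    show ((n:ℝ)+1) = ((n+1 : ℕ) : ℝ) by push_cast; ring, Real.rpow_natCast,
    div_pow, one_pow]
  ring


lemma exp_tsum (x : ℝ) : Real.exp x = ∑' n : ℕ, x ^ n / n.factorial := by
  rw [Real.exp_eq_exp_ℝ, NormedSpace.exp_eq_tsum_div]

lemma hsum {T t : ℝ} (hT : 0 ≤ T) (ht : 0 ≤ t) :
    Summable (fun n : ℕ => T ^ n * t ^ n / (n.factorial : ℝ) ^ 2) := by
  refine Summable.of_nonneg_of_le (fun n => by positivity) (fun n => ?_)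
    (Real.summable_pow_div_factorial (T * t))
  rw [mul_pow]
  gcongr
  all_goals first
    | positivity
    | exact_mod_cast Nat.factorial_pos n
    | (rw [sq]; exact_mod_cast Nat.le_mul_of_pos_left _ (Nat.factorial_pos n))

lemma tsum_sq_bound {T t : ℝ} (hT : 0 ≤ T) (ht : 0 ≤ t) :
    (∑' n : ℕ, T ^ n * t ^ n / (n.factorial : ℝ) ^ 2)
      ≤ Real.exp (2 * Real.sqrt (T * t)) := by
  set x := Real.sqrt (T * t) with hx
  have hx0 : 0 ≤ x := Real.sqrt_nonneg _
  have hxsq : x ^ 2 = T * t := Real.sq_sqrt (by positivity)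
  have hterm : ∀ n : ℕ, T ^ n * t ^ n / (n.factorial : ℝ) ^ 2
      = (x ^ n / n.factorial) ^ 2 := by
    intro n
    rw [div_pow, ← pow_mul, mul_comm n 2, pow_mul, hxsq, mul_pow]
  have hle : ∀ n : ℕ, (x ^ n / (n.factorial : ℝ)) ^ 2
      ≤ Real.exp x * (x ^ n / n.factorial) := by
    intro n
    have h1 : x ^ n / (n.factorial : ℝ) ≤ Real.exp x := by
      rw [exp_tsum]
      exact Summable.le_tsum (Real.summable_pow_div_factorial x) n
        (fun m _ => by positivity)
    have h2 : (0:ℝ) ≤ x ^ n / n.factorial := by positivity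
    calc (x ^ n / (n.factorial : ℝ)) ^ 2
        = (x ^ n / n.factorial) * (x ^ n / n.factorial) := sq _
      _ ≤ Real.exp x * (x ^ n / n.factorial) := by gcongr
  calc (∑' n : ℕ, T ^ n * t ^ n / (n.factorial : ℝ) ^ 2)
      = ∑' n : ℕ, (x ^ n / (n.factorial:ℝ)) ^ 2 := tsum_congr hterm
    _ ≤ ∑' n : ℕ, Real.exp x * (x ^ n / n.factorial) := by
        refine Summable.tsum_le_tsum hle ?_ ?_
        · exact (hsum hT ht).congr hterm
        · exact (Real.summable_pow_div_factorial x).mul_left _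
    _ = Real.exp x * Real.exp x := by
        rw [tsum_mul_left, ← exp_tsum]
    _ = Real.exp (2 * x) := by rw [← Real.exp_add]; ring_nf


lemma amgm {u v : ℝ} (hu : 0 ≤ u) (hv : 0 ≤ v) : 2 * Real.sqrt (u * v) ≤ u + v := by
  nlinarith [sq_nonneg (Real.sqrt u - Real.sqrt v), Real.sq_sqrt hu, Real.sq_sqrt hv,
    Real.sqrt_nonneg u, Real.sqrt_nonneg v, Real.sqrt_mul hu v]

noncomputable def Fn (T : ℝ) (z : ℂ) (n : ℕ) (t : ℝ) : ℂ :=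
  (((-1:ℝ)^n * T^n * t^n / (n.factorial:ℝ)^2 : ℝ) : ℂ) * Complex.exp (-z*t)

lemma Fn_eq (T : ℝ) (z : ℂ) (n : ℕ) : Fn T z n = fun t : ℝ =>
    (((-1:ℝ)^n * T^n / (n.factorial:ℝ)^2 : ℝ) : ℂ) * ((t:ℂ)^n * Complex.exp (-z*t)) := by
  funext t; simp only [Fn]; push_cast; ring

lemma Fn_cont (T : ℝ) (z : ℂ) (n : ℕ) : Continuous (Fn T z n) := by
  rw [Fn_eq]; continuity

lemma Fn_int (T : ℝ) {z : ℂ} (hz : 0 < z.re) (n : ℕ) :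
    IntegrableOn (Fn T z n) (Ioi 0) := by
  rw [Fn_eq]; exact (int_c n hz).const_mul _

lemma Fn_norm {T : ℝ} (hT : 0 ≤ T) (z : ℂ) (n : ℕ) {t : ℝ} (ht : 0 < t) :
    ‖Fn T z n t‖ = (T^n / (n.factorial:ℝ)^2) * (t^n * Real.exp (-z.re * t)) := by
  simp only [Fn]
  rw [norm_mul, Complex.norm_real, norm_exp_neg, Real.norm_eq_abs, abs_div, abs_mul,
    abs_mul, abs_pow, abs_pow, abs_pow, abs_neg, abs_one, one_pow, one_mul,
    abs_of_nonneg hT, abs_of_nonneg ht.le,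
    abs_of_nonneg (by positivity : (0:ℝ) ≤ (n.factorial:ℝ)^2)]
  ring

lemma Fn_norm_int {T : ℝ} (hT : 0 ≤ T) {z : ℂ} (hz : 0 < z.re) (n : ℕ) :
    (∫ t in Ioi (0:ℝ), ‖Fn T z n t‖)
      = (T^n/(n.factorial:ℝ)^2) * ((n.factorial:ℝ)/z.re^(n+1)) := by
  rw [setIntegral_congr_fun measurableSet_Ioi (fun t ht => Fn_norm hT z n ht.out),
    integral_const_mul, int_val n hz]

lemma Fn_summable_norm_int {T : ℝ} (hT : 0 ≤ T) {z : ℂ} (hz : 0 < z.re) :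
    Summable (fun n : ℕ => ∫ t in Ioi (0:ℝ), ‖Fn T z n t‖) := by
  refine (((Real.summable_pow_div_factorial (T/z.re)).mul_right (1/z.re)).congr fun n => ?_)
  rw [Fn_norm_int hT hz n]
  have h4 : (n.factorial:ℝ) ≠ 0 := by exact_mod_cast (Nat.factorial_pos n).ne'
  rw [div_pow]
  field_simp
  ring

lemma Fn_integral {T : ℝ} {z : ℂ} (hz : 0 < z.re) (n : ℕ) :
    (∫ t in Ioi (0:ℝ), Fn T z n t)
      = (-(T:ℂ)/z)^n / n.factorial * (1/z) := by
  have hz0 : z ≠ 0 := fun h => by simp [h] at hz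
  rw [Fn_eq, integral_const_mul, Jval hz n]
  have hb : ((n.factorial:ℂ)) ≠ 0 := by exact_mod_cast (Nat.factorial_pos n).ne'
  push_cast
  rw [div_pow, neg_pow]
  field_simp
  ring

end LTBessel

open LTBessel

/-- **Inverse Laplace transform of `(1/z) e^{−T/z}`** (equation (4.12) in Section 4.3.1 of
the paper). For `T ≥ 0`, `Re z > 0`, and `g(t) = Σ_{n≥0} (−1)^n T^n t^n / (n!)²`
(the Bessel function `J₀(2√(Tt))`), the function `t ↦ g(t) e^{−zt}` is integrable on
`(0,∞)` and its integral equals `(1/z) e^{−T/z}`. -/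
theorem laplace_transform_bessel_J0 (T : ℝ) (hT : 0 ≤ T)
    (z : ℂ) (hz : 0 < z.re)
    (g : ℝ → ℝ)
    (hg : ∀ t ∈ Set.Ioi (0 : ℝ), g t = ∑' n : ℕ,
      (-1 : ℝ) ^ n * T ^ n * t ^ n / ((Nat.factorial n : ℝ)) ^ 2) :
    IntegrableOn (fun t : ℝ => (g t : ℂ) * Complex.exp (-z * t)) (Set.Ioi 0) ∧
    ∫ t in Set.Ioi (0 : ℝ), (g t : ℂ) * Complex.exp (-z * t)
      = (1 / z) * Complex.exp (-(T : ℂ) / z) := by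
  have hc : 0 < z.re := hz
  have hz0 : z ≠ 0 := fun h => by simp [h] at hz
  have habs : ∀ n : ℕ, ∀ t : ℝ, 0 ≤ t →
      |(-1:ℝ)^n * T^n * t^n / (n.factorial:ℝ)^2| = T^n * t^n / (n.factorial:ℝ)^2 := by
    intro n t ht
    rw [abs_div, abs_mul, abs_mul, abs_pow, abs_pow, abs_pow, abs_neg, abs_one, one_pow,
      one_mul, abs_of_nonneg hT, abs_of_nonneg ht,
      abs_of_nonneg (by positivity : (0:ℝ) ≤ (n.factorial:ℝ)^2)]
  have hpt : ∀ t ∈ Set.Ioi (0:ℝ), (g t : ℂ) * Complex.exp (-z*t) = ∑' n, Fn T z n t := by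
    intro t ht
    rw [hg t ht, Complex.ofReal_tsum, ← tsum_mul_right]
    rfl
  have hFsumm : ∀ t ∈ Set.Ioi (0:ℝ), Summable (fun n => Fn T z n t) := by
    intro t ht
    apply Summable.of_norm
    refine (((hsum hT ht.out.le).mul_right (Real.exp (-z.re * t))).congr fun n => ?_)
    rw [Fn_norm hT z n ht.out]
    ring
  have hmeasG : AEStronglyMeasurable (fun t : ℝ => (g t:ℂ) * Complex.exp (-z*t))
      (MeasureTheory.volume.restrict (Set.Ioi 0)) := by
    refine aestronglyMeasurable_of_tendsto_ae (atTop : Filter ℕ)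
      (f := fun N t => ∑ n ∈ Finset.range N, Fn T z n t) (fun N => ?_) ?_
    · exact (Continuous.aestronglyMeasurable
        (continuous_finset_sum _ fun n _ => Fn_cont T z n)).restrict
    · rw [ae_restrict_iff' measurableSet_Ioi]
      filter_upwards with t ht
      rw [hpt t ht]
      exact (hFsumm t ht).hasSum.tendsto_sum_nat
  have hbound : ∀ t ∈ Set.Ioi (0:ℝ), ‖(g t:ℂ) * Complex.exp (-z*t)‖
      ≤ Real.exp (2*T/z.re) * Real.exp (-(z.re/2)*t) := by
    intro t ht
    have ht0 : (0:ℝ) < t := ht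
    rw [norm_mul, Complex.norm_real, norm_exp_neg, Real.norm_eq_abs]
    have h1 : |g t| ≤ Real.exp (2*Real.sqrt (T*t)) := by
      rw [hg t ht]
      have hs : Summable (fun n : ℕ => ‖(-1:ℝ)^n * T^n * t^n / (n.factorial:ℝ)^2‖) := by
        refine (hsum hT ht0.le).congr fun n => ?_
        rw [Real.norm_eq_abs, habs n t ht0.le]
      calc |∑' n : ℕ, (-1:ℝ)^n * T^n * t^n / (n.factorial:ℝ)^2|
          ≤ ∑' n : ℕ, ‖(-1:ℝ)^n * T^n * t^n / (n.factorial:ℝ)^2‖ :=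
            norm_tsum_le_tsum_norm hs
        _ = ∑' n : ℕ, T^n * t^n / (n.factorial:ℝ)^2 :=
            tsum_congr fun n => by rw [Real.norm_eq_abs, habs n t ht0.le]
        _ ≤ Real.exp (2*Real.sqrt (T*t)) := tsum_sq_bound hT ht0.le
    have h2 : 2*Real.sqrt (T*t) ≤ z.re/2*t + 2*T/z.re := by
      have h3 := amgm (u := z.re/2*t) (v := 2*T/z.re) (by positivity) (by positivity)
      rw [show z.re/2*t*(2*T/z.re) = T*t by field_simp] at h3
      linarith
    calc |g t| * Real.exp (-z.re*t)
        ≤ Real.exp (2*Real.sqrt (T*t)) * Real.exp (-z.re*t) :=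
          mul_le_mul_of_nonneg_right h1 (Real.exp_nonneg _)
      _ = Real.exp (2*Real.sqrt (T*t) + -z.re*t) := by rw [← Real.exp_add]
      _ ≤ Real.exp (2*T/z.re + -(z.re/2)*t) := by
          apply Real.exp_le_exp.mpr; linarith
      _ = Real.exp (2*T/z.re) * Real.exp (-(z.re/2)*t) := by rw [Real.exp_add]
  have hInt : IntegrableOn (fun t : ℝ => (g t : ℂ) * Complex.exp (-z * t)) (Set.Ioi 0) := by
    refine MeasureTheory.Integrable.mono'
      ((exp_neg_integrableOn_Ioi 0 (half_pos hc)).const_mul (Real.exp (2*T/z.re))) hmeasG ?_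
    rw [ae_restrict_iff' measurableSet_Ioi]
    filter_upwards with t ht
    exact hbound t ht
  refine ⟨hInt, ?_⟩
  have hIeq : (∫ t in Set.Ioi (0:ℝ), (g t:ℂ) * Complex.exp (-z*t))
      = ∫ t in Set.Ioi (0:ℝ), ∑' n, Fn T z n t :=
    setIntegral_congr_fun measurableSet_Ioi hpt
  have hswap := integral_tsum_of_summable_integral_norm (F := Fn T z)
    (Fn_int T hz) (Fn_summable_norm_int hT hz)
  rw [hIeq, ← hswap, tsum_congr (Fn_integral hz), tsum_mul_right, Complex.exp_eq_exp_ℂ,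
    NormedSpace.exp_eq_tsum_div]
  ring
end

section
/- Let T > 0 and z ∈ ℂ with Re z ≥ 0. Then the function t ↦ (T / (2√(π t³))) e^{−T²/(4t)} e^{−zt} is integrable on (0,∞) and ∫_0^∞ (T / (2√(π t³))) e^{−T²/(4t)} e^{−zt} dt = e^{−T√z}, where √z denotes the principal branch of the square root. -/
open MeasureTheory Set Filter Topology

namespace LaplaceLevy

/-- `x e^{-x} ≤ 1` packaged: `e^{-β/u}/u ≤ 1/β`. -/
lemma aux_bound {β u : ℝ} (hβ : 0 < β) (hu : 0 < u) :
    Real.exp (-(β / u)) / u ≤ 1 / β := by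
  have h1 : β / u ≤ Real.exp (β / u) := by
    have := Real.add_one_le_exp (β / u)
    nlinarith [div_pos hβ hu]
  have h2 : Real.exp (-(β/u)) = (Real.exp (β/u))⁻¹ := by
    rw [Real.exp_neg]
  rw [h2]
  rw [div_le_div_iff₀ hu hβ]
  have h3 : 0 < Real.exp (β / u) := Real.exp_pos _
  rw [inv_mul_le_iff₀ h3]
  have h4 := mul_le_mul_of_nonneg_right h1 hu.le
  rw [div_mul_cancel₀ _ hu.ne'] at h4
  linarith

lemma sq_half {z : ℂ} (hz : z ≠ 0) : (z ^ (1/2 : ℂ)) ^ 2 = z := by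
  rw [sq, ← Complex.cpow_add _ _ hz]
  norm_num

lemma re_half_pos {z : ℂ} (hz : 0 < z.re) : 0 < (z ^ (1/2 : ℂ)).re := by
  have hz0 : z ≠ 0 := fun h => by simp [h] at hz
  rw [Complex.cpow_def_of_ne_zero hz0]
  rw [Complex.exp_re]
  apply mul_pos (Real.exp_pos _)
  apply Real.cos_pos_of_mem_Ioo
  have harg : |z.arg| < Real.pi / 2 := Complex.abs_arg_lt_pi_div_two_iff.mpr (Or.inl hz)
  have him : (Complex.log z * (1/2)).im = z.arg / 2 := by
    simp [Complex.mul_im, Complex.log_im]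
    ring
  rw [him]
  constructor
  · nlinarith [abs_lt.mp harg, Real.pi_pos]
  · nlinarith [abs_lt.mp harg, Real.pi_pos]

lemma eq_of_sq_eq {u v : ℂ} (h : u ^ 2 = v ^ 2) (hu : 0 < u.re) (hv : 0 < v.re) : u = v := by
  have : (u - v) * (u + v) = 0 := by ring_nf; rw [sq, sq] at h; linear_combination h
  rcases mul_eq_zero.mp this with h1 | h1
  · exact sub_eq_zero.mp h1
  · exfalso
    have : u = -v := by linear_combination h1
    rw [this] at hu
    simp at hu
    linarith


noncomputable def K (z : ℂ) (r v : ℝ) : ℂ :=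
  Complex.exp (-(v : ℂ) ^ 2 - z * (r : ℂ) ^ 2 / (v : ℂ) ^ 2)

noncomputable def L (z : ℂ) (r w : ℝ) : ℂ :=
  Complex.exp (-(r : ℂ) ^ 2 / (w : ℂ) ^ 2 - z * (w : ℂ) ^ 2)

noncomputable def psi (z : ℂ) (r : ℝ) : ℂ := ∫ v in Ioi (0:ℝ), K z r v

noncomputable def chi (z : ℂ) (r : ℝ) : ℂ := ∫ w in Ioi (0:ℝ), L z r w

lemma norm_K (z : ℂ) (r v : ℝ) :
    ‖K z r v‖ = Real.exp (-(v ^ 2) - z.re * (r ^ 2 / v ^ 2)) := by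
  have h : -(v : ℂ) ^ 2 - z * (r : ℂ) ^ 2 / (v : ℂ) ^ 2
      = ((-(v ^ 2) : ℝ) : ℂ) - z * ((r ^ 2 / v ^ 2 : ℝ) : ℂ) := by push_cast; ring
  rw [K, h, Complex.norm_exp, Complex.sub_re, Complex.ofReal_re,
    Complex.mul_re, Complex.ofReal_re, Complex.ofReal_im, mul_zero, sub_zero]

lemma norm_L (z : ℂ) (r w : ℝ) :
    ‖L z r w‖ = Real.exp (-(r ^ 2 / w ^ 2) - z.re * w ^ 2) := by
  have h : -(r : ℂ) ^ 2 / (w : ℂ) ^ 2 - z * (w : ℂ) ^ 2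
      = ((-(r ^ 2 / w ^ 2) : ℝ) : ℂ) - z * ((w ^ 2 : ℝ) : ℂ) := by push_cast; ring
  rw [L, h, Complex.norm_exp, Complex.sub_re, Complex.ofReal_re,
    Complex.mul_re, Complex.ofReal_re, Complex.ofReal_im, mul_zero, sub_zero]

lemma norm_K_le (z : ℂ) (hz : 0 ≤ z.re) (r v : ℝ) :
    ‖K z r v‖ ≤ Real.exp (-(v ^ 2)) := by
  rw [norm_K, Real.exp_le_exp]
  have : 0 ≤ z.re * (r ^ 2 / v ^ 2) := mul_nonneg hz (div_nonneg (sq_nonneg _) (sq_nonneg _))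
  linarith

lemma norm_L_le (z : ℂ) (r w : ℝ) :
    ‖L z r w‖ ≤ Real.exp (-(z.re * w ^ 2)) := by
  rw [norm_L, Real.exp_le_exp]
  have : 0 ≤ r ^ 2 / w ^ 2 := div_nonneg (sq_nonneg _) (sq_nonneg _)
  linarith

lemma continuousOn_K (z : ℂ) (r : ℝ) : ContinuousOn (K z r) (Ioi 0) := by
  apply Complex.continuous_exp.comp_continuousOn
  apply ContinuousOn.sub
  · exact ((Complex.continuous_ofReal.pow 2).neg).continuousOn
  · apply ContinuousOn.div
    · exact continuousOn_const
    · exact (Complex.continuous_ofReal.pow 2).continuousOn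
    · intro v hv
      exact pow_ne_zero 2 (Complex.ofReal_ne_zero.mpr (ne_of_gt hv))

lemma continuousOn_L (z : ℂ) (r : ℝ) : ContinuousOn (L z r) (Ioi 0) := by
  apply Complex.continuous_exp.comp_continuousOn
  apply ContinuousOn.sub
  · apply ContinuousOn.div
    · exact continuousOn_const
    · exact (Complex.continuous_ofReal.pow 2).continuousOn
    · intro v hv
      exact pow_ne_zero 2 (Complex.ofReal_ne_zero.mpr (ne_of_gt hv))
  · exact (continuous_const.mul (Complex.continuous_ofReal.pow 2)).continuousOn

lemma integrable_gauss_bound : IntegrableOn (fun v : ℝ => Real.exp (-(v ^ 2))) (Ioi 0) := by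
  have := (integrable_exp_neg_mul_sq (one_pos)).integrableOn (s := Ioi (0:ℝ))
  simpa using this

lemma integrableOn_K (z : ℂ) (hz : 0 ≤ z.re) (r : ℝ) : IntegrableOn (K z r) (Ioi 0) := by
  apply Integrable.mono' integrable_gauss_bound
    ((continuousOn_K z r).aestronglyMeasurable measurableSet_Ioi)
  filter_upwards with v
  exact norm_K_le z hz r v

lemma integrable_gauss_bound' {b : ℝ} (hb : 0 < b) :
    IntegrableOn (fun v : ℝ => Real.exp (-(b * v ^ 2))) (Ioi 0) := by
  have := (integrable_exp_neg_mul_sq hb).integrableOn (s := Ioi (0:ℝ))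
  simpa using this

lemma integrableOn_L (z : ℂ) (hz : 0 < z.re) (r : ℝ) : IntegrableOn (L z r) (Ioi 0) := by
  apply Integrable.mono' (integrable_gauss_bound' hz)
    ((continuousOn_L z r).aestronglyMeasurable measurableSet_Ioi)
  filter_upwards with w
  exact norm_L_le z r w

lemma hasDerivAt_K (z : ℂ) {v : ℝ} (hv : v ≠ 0) (r : ℝ) :
    HasDerivAt (fun r => K z r v) (-2 * z * (r : ℂ) / (v : ℂ) ^ 2 * K z r v) r := by
  have hv2 : ((v : ℂ)) ^ 2 ≠ 0 := pow_ne_zero 2 (Complex.ofReal_ne_zero.mpr hv)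
  have hsq : HasDerivAt (fun r : ℝ => ((r : ℂ)) ^ 2) (((2 * r : ℝ) : ℂ)) r := by
    simpa using (hasDerivAt_pow 2 r).ofReal_comp
  have h2 := (((hsq.const_mul z).div_const ((v:ℂ)^2))).const_sub (-(v:ℂ)^2)
  have h3 := h2.cexp
  refine h3.congr_deriv ?_
  simp only [K]
  push_cast
  ring

lemma hasDerivAt_L (z : ℂ) {w : ℝ} (hw : w ≠ 0) (r : ℝ) :
    HasDerivAt (fun r => L z r w) (-2 * (r : ℂ) / (w : ℂ) ^ 2 * L z r w) r := by
  have hsq : HasDerivAt (fun r : ℝ => ((r : ℂ)) ^ 2) (((2 * r : ℝ) : ℂ)) r := by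
    simpa using (hasDerivAt_pow 2 r).ofReal_comp
  have h2 := ((hsq.neg.div_const ((w:ℂ)^2))).sub_const (z * (w:ℂ)^2)
  have h3 := h2.cexp
  refine h3.congr_deriv ?_
  simp only [L, Pi.neg_apply]
  push_cast
  ring

lemma image_div (r : ℝ) (hr : 0 < r) : (fun w : ℝ => r / w) '' Ioi 0 = Ioi 0 := by
  ext t
  constructor
  · rintro ⟨w, hw, rfl⟩
    exact div_pos hr hw
  · intro ht
    refine ⟨r / t, div_pos hr ht, ?_⟩
    field_simp

lemma integral_comp_div (r : ℝ) (hr : 0 < r) (g : ℝ → ℂ) :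
    ∫ x in Ioi (0:ℝ), g x = ∫ w in Ioi (0:ℝ), (r / w ^ 2) • g (r / w) := by
  have hd : ∀ w ∈ Ioi (0:ℝ), HasDerivWithinAt (fun w : ℝ => r / w) (-(r / w ^ 2)) (Ioi 0) w := by
    intro w hw
    have h := ((hasDerivAt_inv (ne_of_gt hw)).const_mul r).hasDerivWithinAt
      (s := Ioi (0:ℝ))
    refine h.congr_deriv ?_
    rw [div_eq_mul_inv]
    ring
  have hinj : InjOn (fun w : ℝ => r / w) (Ioi 0) := by
    intro a ha b hb h
    simp only at h
    have h2 := congrArg (·⁻¹) h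
    simp only [inv_div] at h2
    field_simp [ne_of_gt hr] at h2
    exact h2
  conv_lhs => rw [← image_div r hr]
  rw [integral_image_eq_integral_abs_deriv_smul measurableSet_Ioi hd hinj]
  apply setIntegral_congr_fun measurableSet_Ioi
  intro w hw
  simp only
  rw [abs_neg, abs_of_pos (div_pos hr (pow_pos hw 2))]

lemma image_div_sq (c : ℝ) (hc : 0 < c) : (fun v : ℝ => c / v ^ 2) '' Ioi 0 = Ioi 0 := by
  ext t
  constructor
  · rintro ⟨v, hv, rfl⟩
    exact div_pos hc (pow_pos hv 2)
  · intro ht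
    refine ⟨Real.sqrt (c / t), Real.sqrt_pos.mpr (div_pos hc ht), ?_⟩
    simp only
    rw [Real.sq_sqrt (div_pos hc ht).le]
    field_simp

lemma hd_div_sq (c : ℝ) :
    ∀ v ∈ Ioi (0:ℝ), HasDerivWithinAt (fun v : ℝ => c / v ^ 2) (-(2 * c / v ^ 3)) (Ioi 0) v := by
  intro v hv
  have hv0 : v ≠ 0 := ne_of_gt hv
  have h := (((hasDerivAt_pow 2 v).inv (pow_ne_zero 2 hv0)).const_mul c).hasDerivWithinAt
    (s := Ioi (0:ℝ))
  refine h.congr_deriv ?_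
  push_cast
  field_simp

lemma inj_div_sq (c : ℝ) (hc : 0 < c) : InjOn (fun v : ℝ => c / v ^ 2) (Ioi 0) := by
  intro a ha b hb h
  simp only at h
  have h2 := congrArg (·⁻¹) h
  simp only [inv_div] at h2
  field_simp [ne_of_gt hc] at h2
  rw [← Real.sqrt_sq (le_of_lt ha), ← Real.sqrt_sq (le_of_lt hb), h2]

lemma integrableOn_comp_div_sq (c : ℝ) (hc : 0 < c) (g : ℝ → ℂ) :
    IntegrableOn g (Ioi 0) ↔ IntegrableOn (fun v => (2 * c / v ^ 3) • g (c / v ^ 2)) (Ioi 0) := by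
  have h := integrableOn_image_iff_integrableOn_abs_deriv_smul measurableSet_Ioi
    (hd_div_sq c) (inj_div_sq c hc) g
  rw [image_div_sq c hc] at h
  rw [h]
  constructor <;> intro h2 <;> apply h2.congr_fun _ measurableSet_Ioi <;> intro v hv <;>
    simp only <;>
    rw [abs_neg, abs_of_pos (div_pos (by linarith : (0:ℝ) < 2 * c) (pow_pos hv 3))]

lemma integral_comp_div_sq (c : ℝ) (hc : 0 < c) (g : ℝ → ℂ) :
    ∫ x in Ioi (0:ℝ), g x = ∫ v in Ioi (0:ℝ), (2 * c / v ^ 3) • g (c / v ^ 2) := by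
  conv_lhs => rw [← image_div_sq c hc]
  rw [integral_image_eq_integral_abs_deriv_smul measurableSet_Ioi (hd_div_sq c) (inj_div_sq c hc)]
  apply setIntegral_congr_fun measurableSet_Ioi
  intro v hv
  simp only
  rw [abs_neg, abs_of_pos (div_pos (by linarith : (0:ℝ) < 2 * c) (pow_pos hv 3))]

lemma K_comp (z : ℂ) {r w : ℝ} (hr : r ≠ 0) (hw : w ≠ 0) : K z r (r / w) = L z r w := by
  rw [K, L]
  congr 1
  have hrc : (r:ℂ) ≠ 0 := Complex.ofReal_ne_zero.mpr hr
  have hwc : (w:ℂ) ≠ 0 := Complex.ofReal_ne_zero.mpr hw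
  push_cast
  field_simp

lemma L_comp (z : ℂ) {r v : ℝ} (hr : r ≠ 0) (hv : v ≠ 0) : L z r (r / v) = K z r v := by
  rw [K, L]
  congr 1
  have hrc : (r:ℂ) ≠ 0 := Complex.ofReal_ne_zero.mpr hr
  have hvc : (v:ℂ) ≠ 0 := Complex.ofReal_ne_zero.mpr hv
  push_cast
  field_simp

lemma psi_hasDeriv (z : ℂ) (hz : 0 < z.re) {r₀ : ℝ} (hr : 0 < r₀) :
    HasDerivAt (psi z) (-2 * z * chi z r₀) r₀ := by
  have hβ0 : 0 < z.re * r₀ ^ 2 / 4 := by positivity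
  set β := z.re * r₀ ^ 2 / 4 with hβ
  set C := 3 * r₀ * ‖z‖ / β with hC
  have key := hasDerivAt_integral_of_dominated_loc_of_deriv_le
      (μ := volume.restrict (Ioi (0:ℝ)))
      (F := fun (r : ℝ) (v : ℝ) => K z r v)
      (F' := fun (r : ℝ) (v : ℝ) => -2 * z * (r:ℂ) / (v:ℂ)^2 * K z r v)
      (x₀ := r₀) (bound := fun v => C * Real.exp (-(v^2)))
      (Metric.ball_mem_nhds r₀ (half_pos hr)) ?_ ?_ ?_ ?_ ?_ ?_
  · obtain ⟨-, h⟩ := key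
    have hval : (∫ v in Ioi (0:ℝ), -2 * z * (r₀:ℂ) / (v:ℂ)^2 * K z r₀ v)
        = -2 * z * chi z r₀ := by
      rw [integral_comp_div r₀ hr]
      rw [setIntegral_congr_fun measurableSet_Ioi (g := fun w => -2 * z * L z r₀ w) ?_]
      · rw [chi, MeasureTheory.integral_const_mul]
      · intro w hw
        simp only
        have hwc : (w:ℂ) ≠ 0 := Complex.ofReal_ne_zero.mpr (ne_of_gt hw)
        have hrc : (r₀:ℂ) ≠ 0 := Complex.ofReal_ne_zero.mpr (ne_of_gt hr)
        rw [K_comp z (ne_of_gt hr) (ne_of_gt hw), Complex.real_smul]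
        push_cast
        field_simp
    rw [hval] at h
    exact h
  · exact Eventually.of_forall fun r =>
      ((continuousOn_K z r).aestronglyMeasurable measurableSet_Ioi)
  · exact integrableOn_K z hz.le r₀
  · apply ContinuousOn.aestronglyMeasurable _ measurableSet_Ioi
    apply ContinuousOn.mul _ (continuousOn_K z r₀)
    apply ContinuousOn.div continuousOn_const
      (Complex.continuous_ofReal.pow 2).continuousOn
    intro v hv
    exact pow_ne_zero 2 (Complex.ofReal_ne_zero.mpr (ne_of_gt hv))
  · filter_upwards [ae_restrict_mem measurableSet_Ioi] with v hv r hrb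
    have hv0 : (0:ℝ) < v := hv
    rw [Metric.mem_ball, Real.dist_eq] at hrb
    obtain ⟨hrb1, hrb2⟩ := abs_lt.mp hrb
    have hrpos : 0 < r := by linarith
    have h1 : |r| ≤ 3 * r₀ / 2 := by rw [abs_of_pos hrpos]; linarith
    have hnorm : ‖(-2 * z * (r:ℂ) / (v:ℂ)^2)‖ = 2 * ‖z‖ * |r| / v^2 := by
      simp only [norm_div, norm_mul, norm_neg, norm_pow, Complex.norm_real, Real.norm_eq_abs, Complex.norm_two, sq_abs]
    have h2 : β / v^2 ≤ z.re * (r^2 / v^2) := by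
      have hval2 : z.re * (r^2/v^2) * v^2 = z.re * r^2 := by field_simp
      rw [div_le_iff₀ (pow_pos hv0 2), hval2, hβ]
      have hr2 : (r₀/2)^2 ≤ r^2 := by nlinarith
      have h5 := mul_le_mul_of_nonneg_left hr2 hz.le
      nlinarith [h5]
    calc ‖-2 * z * (r:ℂ) / (v:ℂ)^2 * K z r v‖
        = (2 * ‖z‖ * |r| / v^2) * Real.exp (-(v^2) - z.re * (r^2 / v^2)) := by
          rw [norm_mul, hnorm, norm_K]
      _ ≤ (2 * ‖z‖ * (3 * r₀ / 2) / v^2) * Real.exp (-(v^2) + -(β / v^2)) := by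
          have e1 : 2 * ‖z‖ * |r| / v ^ 2 ≤ 2 * ‖z‖ * (3*r₀/2) / v ^ 2 := by
            gcongr
          have e2 : Real.exp (-(v^2) - z.re * (r^2/v^2)) ≤ Real.exp (-(v^2) + -(β/v^2)) := by
            apply Real.exp_le_exp.mpr
            linarith [h2]
          exact mul_le_mul e1 e2 (Real.exp_pos _).le (by positivity)
      _ = (3 * r₀ * ‖z‖) * (Real.exp (-(β / v^2)) / v^2) * Real.exp (-(v^2)) := by
          rw [Real.exp_add]
          ring
      _ ≤ (3 * r₀ * ‖z‖) * (1 / β) * Real.exp (-(v^2)) := by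
          have e3 : (0:ℝ) ≤ 3 * r₀ * ‖z‖ := by positivity
          have e4 := mul_le_mul_of_nonneg_left (aux_bound hβ0 (pow_pos hv0 2)) e3
          exact mul_le_mul_of_nonneg_right e4 (Real.exp_pos _).le
      _ = C * Real.exp (-(v^2)) := by rw [hC]; ring
  · exact (integrable_gauss_bound.const_mul C)
  · filter_upwards [ae_restrict_mem measurableSet_Ioi] with v hv r _
    exact hasDerivAt_K z (ne_of_gt hv) r

lemma chi_hasDeriv (z : ℂ) (hz : 0 < z.re) {r₀ : ℝ} (hr : 0 < r₀) :
    HasDerivAt (chi z) (-2 * psi z r₀) r₀ := by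
  have hβ0 : 0 < r₀ ^ 2 / 4 := by positivity
  set β := r₀ ^ 2 / 4 with hβ
  set C := 3 * r₀ / β with hC
  have key := hasDerivAt_integral_of_dominated_loc_of_deriv_le
      (μ := volume.restrict (Ioi (0:ℝ)))
      (F := fun (r : ℝ) (w : ℝ) => L z r w)
      (F' := fun (r : ℝ) (w : ℝ) => -2 * (r:ℂ) / (w:ℂ)^2 * L z r w)
      (x₀ := r₀) (bound := fun w => C * Real.exp (-(z.re * w^2)))
      (Metric.ball_mem_nhds r₀ (half_pos hr)) ?_ ?_ ?_ ?_ ?_ ?_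
  · obtain ⟨-, h⟩ := key
    have hval : (∫ w in Ioi (0:ℝ), -2 * (r₀:ℂ) / (w:ℂ)^2 * L z r₀ w)
        = -2 * psi z r₀ := by
      rw [integral_comp_div r₀ hr]
      rw [setIntegral_congr_fun measurableSet_Ioi (g := fun v => -2 * K z r₀ v) ?_]
      · rw [psi, MeasureTheory.integral_const_mul]
      · intro v hv
        simp only
        have hvc : (v:ℂ) ≠ 0 := Complex.ofReal_ne_zero.mpr (ne_of_gt hv)
        have hrc : (r₀:ℂ) ≠ 0 := Complex.ofReal_ne_zero.mpr (ne_of_gt hr)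
        rw [L_comp z (ne_of_gt hr) (ne_of_gt hv), Complex.real_smul]
        push_cast
        field_simp
    rw [hval] at h
    exact h
  · exact Eventually.of_forall fun r =>
      ((continuousOn_L z r).aestronglyMeasurable measurableSet_Ioi)
  · exact integrableOn_L z hz r₀
  · apply ContinuousOn.aestronglyMeasurable _ measurableSet_Ioi
    apply ContinuousOn.mul _ (continuousOn_L z r₀)
    apply ContinuousOn.div continuousOn_const
      (Complex.continuous_ofReal.pow 2).continuousOn
    intro w hw
    exact pow_ne_zero 2 (Complex.ofReal_ne_zero.mpr (ne_of_gt hw))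
  · filter_upwards [ae_restrict_mem measurableSet_Ioi] with w hw r hrb
    have hw0 : (0:ℝ) < w := hw
    rw [Metric.mem_ball, Real.dist_eq] at hrb
    obtain ⟨hrb1, hrb2⟩ := abs_lt.mp hrb
    have hrpos : 0 < r := by linarith
    have h1 : |r| ≤ 3 * r₀ / 2 := by rw [abs_of_pos hrpos]; linarith
    have hnorm : ‖(-2 * (r:ℂ) / (w:ℂ)^2)‖ = 2 * |r| / w^2 := by
      simp only [norm_div, norm_mul, norm_neg, norm_pow, Complex.norm_real, Real.norm_eq_abs, Complex.norm_two, sq_abs]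
    have h2 : β / w^2 ≤ r^2 / w^2 := by
      have hr2 : β ≤ r^2 := by rw [hβ]; nlinarith
      gcongr
    calc ‖-2 * (r:ℂ) / (w:ℂ)^2 * L z r w‖
        = (2 * |r| / w^2) * Real.exp (-(r^2 / w^2) - z.re * w^2) := by
          rw [norm_mul, hnorm, norm_L]
      _ ≤ (2 * (3 * r₀ / 2) / w^2) * Real.exp (-(β / w^2) + -(z.re * w^2)) := by
          have e1 : 2 * |r| / w ^ 2 ≤ 2 * (3*r₀/2) / w ^ 2 := by gcongr
          have e2 : Real.exp (-(r^2/w^2) - z.re * w^2)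
              ≤ Real.exp (-(β/w^2) + -(z.re * w^2)) := by
            apply Real.exp_le_exp.mpr
            linarith [h2]
          exact mul_le_mul e1 e2 (Real.exp_pos _).le (by positivity)
      _ = (3 * r₀) * (Real.exp (-(β / w^2)) / w^2) * Real.exp (-(z.re * w^2)) := by
          rw [Real.exp_add]
          ring
      _ ≤ (3 * r₀) * (1 / β) * Real.exp (-(z.re * w^2)) := by
          have e3 : (0:ℝ) ≤ 3 * r₀ := by positivity
          have e4 := mul_le_mul_of_nonneg_left (aux_bound hβ0 (pow_pos hw0 2)) e3
          exact mul_le_mul_of_nonneg_right e4 (Real.exp_pos _).le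
      _ = C * Real.exp (-(z.re * w^2)) := by rw [hC]; ring
  · exact ((integrable_gauss_bound' hz).const_mul C)
  · filter_upwards [ae_restrict_mem measurableSet_Ioi] with w hw r _
    exact hasDerivAt_L z (ne_of_gt hw) r

lemma continuous_psi (z : ℂ) (hz : 0 ≤ z.re) : Continuous (psi z) := by
  apply continuous_of_dominated (bound := fun v => Real.exp (-(v^2)))
  · exact fun r => (continuousOn_K z r).aestronglyMeasurable measurableSet_Ioi
  · intro r
    filter_upwards with v
    exact norm_K_le z hz r v
  · exact integrable_gauss_bound
  · filter_upwards [ae_restrict_mem measurableSet_Ioi] with v hv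
    apply Complex.continuous_exp.comp
    apply Continuous.sub continuous_const
    apply Continuous.div_const
    exact (continuous_const.mul (Complex.continuous_ofReal.pow 2))

lemma continuous_chi (z : ℂ) (hz : 0 < z.re) : Continuous (chi z) := by
  apply continuous_of_dominated (bound := fun w => Real.exp (-(z.re * w^2)))
  · exact fun r => (continuousOn_L z r).aestronglyMeasurable measurableSet_Ioi
  · intro r
    filter_upwards with w
    exact norm_L_le z r w
  · exact integrable_gauss_bound' hz
  · filter_upwards [ae_restrict_mem measurableSet_Ioi] with w hw
    apply Complex.continuous_exp.comp
    apply Continuous.sub _ continuous_const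
    apply Continuous.div_const
    exact ((Complex.continuous_ofReal.pow 2)).neg

lemma const_from_deriv {R : ℝ} (hR : 0 < R) (f : ℝ → ℂ) (hf : Continuous f)
    (hd : ∀ r ∈ Ioi (0:ℝ), HasDerivAt f 0 r) : f R = f 0 := by
  have h1 : ∀ δ ∈ Ioc (0:ℝ) R, f R = f δ := by
    intro δ hδ
    exact constant_of_has_deriv_right_zero (hf.continuousOn)
      (fun x hx => (hd x (lt_of_lt_of_le hδ.1 hx.1)).hasDerivWithinAt)
      R ⟨hδ.2, le_refl R⟩
  have h2 : Tendsto f (nhdsWithin (0:ℝ) (Ioi 0)) (nhds (f 0)) :=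
    (hf.tendsto 0).mono_left nhdsWithin_le_nhds
  have h3 : Tendsto f (nhdsWithin (0:ℝ) (Ioi 0)) (nhds (f R)) := by
    apply Tendsto.congr' _ tendsto_const_nhds
    filter_upwards [Ioc_mem_nhdsGT hR] with δ hδ
    exact h1 δ hδ
  exact tendsto_nhds_unique h3 h2

lemma psi_zero (z : ℂ) : psi z 0 = ((Real.sqrt Real.pi : ℝ) : ℂ) / 2 := by
  have h1 : ∀ v : ℝ, K z 0 v = Complex.exp (-1 * (v:ℂ)^2) := by
    intro v
    rw [K]
    norm_num
  rw [psi]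
  simp_rw [h1]
  rw [integral_gaussian_complex_Ioi (by norm_num : 0 < (1:ℂ).re)]
  congr 1
  rw [div_one]
  rw [show (1/2 : ℂ) = ((1/2 : ℝ) : ℂ) by norm_num]
  rw [← Complex.ofReal_cpow Real.pi_pos.le]
  rw [← Real.sqrt_eq_rpow]

lemma chi_zero (z : ℂ) (hz : 0 < z.re) :
    chi z 0 = ((Real.pi : ℂ) / z) ^ (1/2 : ℂ) / 2 := by
  have h1 : ∀ w : ℝ, L z 0 w = Complex.exp (-z * (w:ℂ)^2) := by
    intro w
    rw [L]
    norm_num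
  rw [chi]
  simp_rw [h1]
  exact integral_gaussian_complex_Ioi hz

lemma hasDerivAt_cexp_lin (a : ℂ) (r : ℝ) :
    HasDerivAt (fun r : ℝ => Complex.exp (a * (r : ℂ))) (a * Complex.exp (a * (r:ℂ))) r := by
  have h1 : HasDerivAt (fun r : ℝ => ((r : ℂ))) 1 r := by
    simpa using (hasDerivAt_id r).ofReal_comp
  have h2 := (h1.const_mul a).cexp
  simpa [mul_comm] using h2

lemma psi_eq (z : ℂ) (hz : 0 < z.re) {R : ℝ} (hR : 0 < R) :
    psi z R = ((Real.sqrt Real.pi : ℝ) : ℂ) / 2 * Complex.exp (-2 * z ^ (1/2 : ℂ) * (R:ℂ)) := by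
  set c := z ^ (1/2 : ℂ) with hc
  have hz0 : z ≠ 0 := fun h => by simp [h] at hz
  have hc2 : c ^ 2 = z := sq_half hz0
  have hcre : 0 < c.re := re_half_pos hz
  have hc0 : c ≠ 0 := fun h => by rw [h] at hcre; simp at hcre
  have hn : 0 < Complex.normSq z := Complex.normSq_pos.mpr hz0
  have hkey : c * chi z 0 = ((Real.sqrt Real.pi : ℝ) : ℂ) / 2 := by
    rw [chi_zero z hz]
    have hpz : ((Real.pi : ℂ) / z) ≠ 0 :=
      div_ne_zero (Complex.ofReal_ne_zero.mpr Real.pi_ne_zero) hz0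
    have hu2 : ((((Real.pi : ℂ) / z) ^ (1/2 : ℂ))) ^ 2 = (Real.pi : ℂ) / z := sq_half hpz
    have hure : 0 < ((((Real.pi : ℂ) / z) ^ (1/2 : ℂ))).re := by
      apply re_half_pos
      rw [Complex.div_re]
      simp only [Complex.ofReal_re, Complex.ofReal_im, zero_mul, zero_div, add_zero]
      exact div_pos (mul_pos Real.pi_pos hz) hn
    have hv2 : ((((Real.sqrt Real.pi : ℝ) : ℂ)) / c) ^ 2 = (Real.pi : ℂ) / z := by
      rw [div_pow, hc2]
      congr 1
      rw [← Complex.ofReal_pow, Real.sq_sqrt Real.pi_pos.le]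
    have hvre : 0 < ((((Real.sqrt Real.pi : ℝ) : ℂ)) / c).re := by
      rw [Complex.div_re]
      simp only [Complex.ofReal_re, Complex.ofReal_im, zero_mul, zero_div, add_zero]
      exact div_pos (mul_pos (Real.sqrt_pos.mpr Real.pi_pos) hcre)
        (Complex.normSq_pos.mpr hc0)
    have heq := eq_of_sq_eq (hu2.trans hv2.symm) hure hvre
    rw [heq]
    field_simp
  set A : ℝ → ℂ := fun r => Complex.exp (2 * c * (r : ℂ)) * (psi z r + c * chi z r) with hA
  set B : ℝ → ℂ := fun r => Complex.exp (-(2 * c) * (r : ℂ)) * (psi z r - c * chi z r) with hB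
  have hAd : ∀ r ∈ Ioi (0:ℝ), HasDerivAt A 0 r := by
    intro r hr
    have h := (hasDerivAt_cexp_lin (2 * c) r).mul
      ((psi_hasDeriv z hz hr).add ((chi_hasDeriv z hz hr).const_mul c))
    refine h.congr_deriv ?_
    have hzc : z = c ^ 2 := hc2.symm
    rw [hzc]
    simp only [Pi.add_apply, Pi.sub_apply]
    ring
  have hBd : ∀ r ∈ Ioi (0:ℝ), HasDerivAt B 0 r := by
    intro r hr
    have h := (hasDerivAt_cexp_lin (-(2 * c)) r).mul
      ((psi_hasDeriv z hz hr).sub ((chi_hasDeriv z hz hr).const_mul c))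
    refine h.congr_deriv ?_
    have hzc : z = c ^ 2 := hc2.symm
    rw [hzc]
    simp only [Pi.add_apply, Pi.sub_apply]
    ring
  have hexpc : Continuous fun r : ℝ => Complex.exp (2 * c * (r : ℂ)) :=
    Complex.continuous_exp.comp (continuous_const.mul Complex.continuous_ofReal)
  have hexpc' : Continuous fun r : ℝ => Complex.exp (-(2 * c) * (r : ℂ)) :=
    Complex.continuous_exp.comp (continuous_const.mul Complex.continuous_ofReal)
  have hAc : Continuous A :=
    hexpc.mul ((continuous_psi z hz.le).add (continuous_const.mul (continuous_chi z hz)))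
  have hBc : Continuous B :=
    hexpc'.mul ((continuous_psi z hz.le).sub (continuous_const.mul (continuous_chi z hz)))
  have hA0 : A R = A 0 := const_from_deriv hR A hAc hAd
  have hB0 : B R = B 0 := const_from_deriv hR B hBc hBd
  have hAv : A 0 = ((Real.sqrt Real.pi : ℝ) : ℂ) := by
    rw [hA]
    simp only [Complex.ofReal_zero, mul_zero, Complex.exp_zero, one_mul]
    rw [psi_zero, hkey]
    ring
  have hBv : B 0 = 0 := by
    rw [hB]
    simp only [Complex.ofReal_zero, mul_zero, Complex.exp_zero, one_mul]
    rw [psi_zero, hkey]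
    ring
  rw [hAv] at hA0
  rw [hBv] at hB0
  rw [hA] at hA0
  rw [hB] at hB0
  simp only at hA0 hB0
  have hBexp : Complex.exp (-(2 * c) * (R:ℂ)) ≠ 0 := Complex.exp_ne_zero _
  have e1 : psi z R - c * chi z R = 0 := by
    rcases mul_eq_zero.mp hB0 with h | h
    · exact absurd h hBexp
    · exact h
  have e3 : Complex.exp (2 * c * (R:ℂ)) * (2 * psi z R) = ((Real.sqrt Real.pi : ℝ) : ℂ) := by
    linear_combination hA0 + Complex.exp (2 * c * (R:ℂ)) * e1
  have hexpR : Complex.exp (-2 * c * (R:ℂ)) = (Complex.exp (2 * c * (R:ℂ)))⁻¹ := by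
    rw [← Complex.exp_neg]
    congr 1
    ring
  rw [hexpR]
  field_simp
  linear_combination e3

lemma psi_zero_left (r : ℝ) : psi 0 r = ((Real.sqrt Real.pi : ℝ) : ℂ) / 2 := by
  have h1 : ∀ v : ℝ, K 0 r v = Complex.exp (-1 * (v:ℂ)^2) := by
    intro v
    rw [K]
    norm_num
  rw [psi]
  simp_rw [h1]
  rw [integral_gaussian_complex_Ioi (by norm_num : 0 < (1:ℂ).re)]
  rw [div_one]
  rw [show (1/2 : ℂ) = ((1/2 : ℝ) : ℂ) by norm_num]
  rw [← Complex.ofReal_cpow Real.pi_pos.le]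
  rw [← Real.sqrt_eq_rpow]

lemma psi_final_pos (z : ℂ) (hz : 0 < z.re) {T : ℝ} (hT : 0 < T) :
    psi z (T/2) = ((Real.sqrt Real.pi : ℝ) : ℂ) / 2
      * Complex.exp (-(T:ℂ) * z ^ (1/2 : ℂ)) := by
  rw [psi_eq z hz (half_pos hT)]
  congr 2
  push_cast
  ring

lemma psi_final (z : ℂ) (hz : 0 ≤ z.re) {T : ℝ} (hT : 0 < T) :
    psi z (T/2) = ((Real.sqrt Real.pi : ℝ) : ℂ) / 2
      * Complex.exp (-(T:ℂ) * z ^ (1/2 : ℂ)) := by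
  rcases lt_or_eq_of_le hz with hz' | hz'
  · exact psi_final_pos z hz' hT
  · rcases eq_or_ne z 0 with hz0 | hz0
    · rw [hz0, psi_zero_left, Complex.zero_cpow (by norm_num : (1/2:ℂ) ≠ 0)]
      simp
    · -- boundary case : z.re = 0, z ≠ 0
      have hre : z.re = 0 := hz'.symm
      have him : z.im ≠ 0 := by
        intro h
        apply hz0
        apply Complex.ext <;> simp [hre, h]
      set R := T / 2 with hRdef
      set zn : ℕ → ℂ := fun n => z + ((1 / (n + 1) : ℝ) : ℂ) with hzn
      have hznre : ∀ n : ℕ, 0 < (zn n).re := by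
        intro n
        rw [hzn]
        simp only [Complex.add_re, Complex.ofReal_re, hre, zero_add]
        positivity
      have htz : Tendsto zn atTop (𝓝 z) := by
        rw [hzn]
        have h0 : Tendsto (fun n : ℕ => (1 / (n + 1) : ℝ)) atTop (𝓝 0) :=
          tendsto_one_div_add_atTop_nhds_zero_nat
        have h1 := (Complex.continuous_ofReal.tendsto 0).comp h0
        simpa using tendsto_const_nhds.add h1
      have h1 : Tendsto (fun n => psi (zn n) R) atTop (𝓝 (psi z R)) := by
        apply tendsto_integral_filter_of_dominated_convergence
          (bound := fun v : ℝ => Real.exp (-(v^2)))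
        · exact Eventually.of_forall fun n =>
            (continuousOn_K (zn n) R).aestronglyMeasurable measurableSet_Ioi
        · apply Eventually.of_forall
          intro n
          filter_upwards with v
          exact norm_K_le (zn n) (hznre n).le R v
        · exact integrable_gauss_bound
        · filter_upwards [ae_restrict_mem measurableSet_Ioi] with v hv
          have hcont : Continuous fun w : ℂ =>
              Complex.exp (-(v:ℂ)^2 - w * (R:ℂ)^2 / (v:ℂ)^2) := by
            apply Complex.continuous_exp.comp
            apply Continuous.sub continuous_const
            exact (continuous_id.mul continuous_const).div_const _
          exact ((hcont.tendsto z).comp htz)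
      have h2 : ∀ n, psi (zn n) R = ((Real.sqrt Real.pi : ℝ) : ℂ) / 2
          * Complex.exp (-(T:ℂ) * (zn n) ^ (1/2 : ℂ)) := fun n =>
        psi_final_pos (zn n) (hznre n) hT
      have hslit : z ∈ Complex.slitPlane := Complex.mem_slitPlane_iff.mpr (Or.inr him)
      have h3 : Tendsto (fun n => ((Real.sqrt Real.pi : ℝ) : ℂ) / 2
          * Complex.exp (-(T:ℂ) * (zn n) ^ (1/2 : ℂ))) atTop
          (𝓝 (((Real.sqrt Real.pi : ℝ) : ℂ) / 2
          * Complex.exp (-(T:ℂ) * z ^ (1/2 : ℂ)))) := by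
        have hcont : ContinuousAt (fun w : ℂ => ((Real.sqrt Real.pi : ℝ) : ℂ) / 2
            * Complex.exp (-(T:ℂ) * w ^ (1/2 : ℂ))) z := by
          apply ContinuousAt.mul continuousAt_const
          apply (Complex.continuous_exp.continuousAt).comp
          exact ContinuousAt.mul continuousAt_const (continuousAt_cpow_const hslit)
        exact hcont.tendsto.comp htz
      have h4 : Tendsto (fun n => psi (zn n) R) atTop
          (𝓝 (((Real.sqrt Real.pi : ℝ) : ℂ) / 2
          * Complex.exp (-(T:ℂ) * z ^ (1/2 : ℂ)))) := by
        rw [show (fun n => psi (zn n) R) = fun n => ((Real.sqrt Real.pi : ℝ) : ℂ) / 2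
          * Complex.exp (-(T:ℂ) * (zn n) ^ (1/2 : ℂ)) from funext h2]
        exact h3
      exact tendsto_nhds_unique h1 h4

lemma reduce_pointwise (T : ℝ) (hT : 0 < T) (z : ℂ) :
    ∀ v ∈ Ioi (0:ℝ),
      ((2 * (T^2/4) / v^3 : ℝ) •
        (((T / (2 * Real.sqrt (Real.pi * ((T^2/4)/v^2) ^ 3))
            * Real.exp (-T ^ 2 / (4 * ((T^2/4)/v^2))) : ℝ) : ℂ)
          * Complex.exp (-z * (((T^2/4)/v^2 : ℝ) : ℂ))))
      = (2 / Real.sqrt Real.pi : ℝ) • K z (T/2) v := by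
  intro v hv
  have hv0 : (0:ℝ) < v := hv
  have hπ : Real.sqrt Real.pi ≠ 0 := by
    simp [Real.sqrt_ne_zero', Real.pi_pos]
  have hsq : Real.sqrt (Real.pi * ((T^2/4)/v^2)^3) = Real.sqrt Real.pi * T^3 / (8 * v^3) := by
    have h : Real.pi * ((T^2/4)/v^2)^3 = (Real.sqrt Real.pi * T^3 / (8 * v^3))^2 := by
      conv_rhs => rw [div_pow, mul_pow, Real.sq_sqrt Real.pi_pos.le]
      field_simp
      ring
    rw [h, Real.sqrt_sq (by positivity)]
  have hexp : -T^2/(4 * ((T^2/4)/v^2)) = -(v^2) := by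
    field_simp
  rw [hsq, hexp, K, Complex.real_smul, Complex.real_smul]
  have harg : -(v:ℂ)^2 - z * ((T/2 : ℝ):ℂ)^2 / (v:ℂ)^2
      = ((-(v^2) : ℝ) : ℂ) + -z * (((T^2/4)/v^2 : ℝ) : ℂ) := by
    push_cast
    have hvc : (v:ℂ) ≠ 0 := Complex.ofReal_ne_zero.mpr hv0.ne'
    field_simp
    ring
  rw [harg, Complex.exp_add, ← Complex.ofReal_exp]
  rw [← mul_assoc, ← mul_assoc, ← Complex.ofReal_mul, ← Complex.ofReal_mul]
  congr 2
  field_simp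
  ring

end LaplaceLevy

open LaplaceLevy

/-- **Inverse Laplace transform of `e^{−T√z}`** (Section 4.4 of the paper). For `T > 0`
and `Re z ≥ 0`, the function `t ↦ (T/(2√(π t³))) e^{−T²/(4t)} e^{−zt}` is integrable on
`(0,∞)` and `∫_0^∞ (T/(2√(π t³))) e^{−T²/(4t)} e^{−zt} dt = e^{−T√z}`, with the principal
branch of the square root. -/
theorem laplace_transform_levy (T : ℝ) (hT : 0 < T) (z : ℂ) (hz : 0 ≤ z.re) :
    IntegrableOn
      (fun t : ℝ =>
        ((T / (2 * Real.sqrt (Real.pi * t ^ 3)) * Real.exp (-T ^ 2 / (4 * t)) : ℝ) : ℂ) *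
          Complex.exp (-z * t))
      (Set.Ioi 0) ∧
    ∫ t in Set.Ioi (0 : ℝ),
        ((T / (2 * Real.sqrt (Real.pi * t ^ 3)) * Real.exp (-T ^ 2 / (4 * t)) : ℝ) : ℂ) *
          Complex.exp (-z * t)
      = Complex.exp (-(T : ℂ) * z ^ (1 / 2 : ℂ)) := by
  have hc₀ : (0:ℝ) < T^2/4 := by positivity
  set Orig : ℝ → ℂ := fun t : ℝ =>
    ((T / (2 * Real.sqrt (Real.pi * t ^ 3)) * Real.exp (-T ^ 2 / (4 * t)) : ℝ) : ℂ) *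
      Complex.exp (-z * t) with hOrig
  have hpt : ∀ v ∈ Ioi (0:ℝ),
      (2 * (T^2/4) / v^3 : ℝ) • Orig ((T^2/4) / v^2)
        = (2 / Real.sqrt Real.pi : ℝ) • K z (T/2) v := by
    intro v hv
    have := reduce_pointwise T hT z v hv
    rw [hOrig]
    convert this using 3 <;> push_cast <;> ring
  have hKint : IntegrableOn (fun v => (2 / Real.sqrt Real.pi : ℝ) • K z (T/2) v) (Ioi 0) :=
    (integrableOn_K z hz (T/2)).smul (2 / Real.sqrt Real.pi : ℝ)
  have hint : IntegrableOn Orig (Ioi 0) := by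
    rw [integrableOn_comp_div_sq (T^2/4) hc₀ Orig]
    exact hKint.congr_fun (fun v hv => (hpt v hv).symm) measurableSet_Ioi
  refine ⟨hint, ?_⟩
  have hval : (∫ t in Ioi (0:ℝ), Orig t)
      = Complex.exp (-(T : ℂ) * z ^ (1 / 2 : ℂ)) := by
    rw [integral_comp_div_sq (T^2/4) hc₀ Orig]
    rw [setIntegral_congr_fun measurableSet_Ioi hpt]
    rw [integral_smul]
    have hpsi : (∫ v in Ioi (0:ℝ), K z (T/2) v) = psi z (T/2) := rfl
    rw [hpsi, psi_final z hz hT, Complex.real_smul]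
    rw [← mul_assoc]
    have hone : ((2 / Real.sqrt Real.pi : ℝ) : ℂ) * (((Real.sqrt Real.pi : ℝ) : ℂ) / 2) = 1 := by
      have hπ : Real.sqrt Real.pi ≠ 0 := by simp [Real.sqrt_ne_zero', Real.pi_pos]
      have hr : (2 / Real.sqrt Real.pi) * (Real.sqrt Real.pi / 2) = 1 := by
        field_simp
      calc ((2 / Real.sqrt Real.pi : ℝ) : ℂ) * (((Real.sqrt Real.pi : ℝ) : ℂ) / 2)
          = (((2 / Real.sqrt Real.pi) * (Real.sqrt Real.pi / 2) : ℝ) : ℂ) := by push_cast; ring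
        _ = 1 := by rw [hr]; norm_num
    rw [hone, one_mul]
  exact hval
end
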